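/- arXiv:2511.05746 — 5 statements merged into one kernel-verified Lean document; each statement's English description precedes it below -/
import Mathlib

section
/- Let $s_1, \dots, s_N, s$ be exchangeable real-valued random variables and define $\hat p = (|\{i : s \ge s_i\}| + 1)/(N+1)$. Then for every $\lambda \in [0,1]$, $\mathbb{P}[\hat p \le \lambda] \le \lambda$, i.e., $\hat p$ is super-uniform. -/
open MeasureTheory Finset ENNReal

namespace ConformalAux

variable {N : ℕ}

noncomputable def R (x : Fin (N + 1) → ℝ) (j : Fin (N + 1)) : ℕ :=
  (Finset.univ.filter (fun i => x i ≤ x j)).card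

lemma card_rank_le (x : Fin (N + 1) → ℝ) (k : ℕ) :
    (Finset.univ.filter fun j => R x j ≤ k).card ≤ k := by
  classical
  by_cases h : (Finset.univ.filter fun j => R x j ≤ k).Nonempty
  · obtain ⟨j, hj, hmax⟩ := Finset.exists_max_image _ x h
    have hj' : R x j ≤ k := (Finset.mem_filter.mp hj).2
    refine le_trans ?_ hj'
    unfold R
    apply Finset.card_le_card
    intro i hi
    simp only [Finset.mem_filter, Finset.mem_univ, true_and]
    exact hmax i hi
  · simp [Finset.not_nonempty_iff_eq_empty.mp h]

lemma measurable_R (j : Fin (N + 1)) : Measurable fun x : Fin (N + 1) → ℝ => R x j := by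
  unfold R
  simp_rw [Finset.card_filter]
  exact Finset.measurable_sum _ fun i _ =>
    Measurable.ite (measurableSet_le (measurable_pi_apply i) (measurable_pi_apply j))
      measurable_const measurable_const

lemma R_comp (x : Fin (N + 1) → ℝ) (σ : Equiv.Perm (Fin (N + 1))) (j : Fin (N + 1)) :
    R (x ∘ σ) j = R x (σ j) := by
  unfold R
  apply Finset.card_bij (fun i _ => σ i)
  · intro a ha
    simp only [Finset.mem_filter, Finset.mem_univ, true_and, Function.comp_apply] at ha ⊢
    exact ha
  · intro a _ b _ hab
    exact σ.injective hab
  · intro b hb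
    refine ⟨σ.symm b, ?_, by simp⟩
    simp only [Finset.mem_filter, Finset.mem_univ, true_and, Function.comp_apply,
      Equiv.apply_symm_apply] at hb ⊢
    exact hb

lemma R_last (x : Fin (N + 1) → ℝ) :
    R x (Fin.last N)
      = (Finset.univ.filter fun i : Fin N => x i.castSucc ≤ x (Fin.last N)).card + 1 := by
  unfold R
  rw [Finset.card_filter, Fin.sum_univ_castSucc, Finset.card_filter]
  simp

end ConformalAux

open ConformalAux

/-- Super-uniformity of the conformal p-value: if `(s₁, …, s_N, s)` (encoded as the
coordinates of the random vector `X`, with `s = X (Fin.last N)`) are exchangeable real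
random variables, then `p̂ = (|{i : s ≥ sᵢ}| + 1)/(N+1)` satisfies `P[p̂ ≤ λ] ≤ λ`
for every `λ ∈ [0,1]`. -/
theorem conformal_pvalue_superuniform {Ω : Type*} [MeasurableSpace Ω]
    (P : Measure Ω) [IsProbabilityMeasure P] (N : ℕ)
    (X : Ω → Fin (N + 1) → ℝ) (hX : Measurable X)
    (hexch : ∀ σ : Equiv.Perm (Fin (N + 1)),
      Measure.map (fun ω => X ω ∘ σ) P = Measure.map X P)
    (lam : ℝ) (hlam : lam ∈ Set.Icc (0 : ℝ) 1) :
    P {ω | ((Nat.card {i : Fin N | X ω i.castSucc ≤ X ω (Fin.last N)} : ℝ) + 1) / (N + 1)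
        ≤ lam} ≤ ENNReal.ofReal lam := by
  classical
  obtain ⟨hlam0, hlam1⟩ := hlam
  set μ := P.map X with hμdef
  have hμprob : IsProbabilityMeasure μ := Measure.isProbabilityMeasure_map hX.aemeasurable
  set k := ⌊lam * (N + 1)⌋₊ with hkdef
  have hNpos : (0 : ℝ) < (N : ℝ) + 1 := by positivity
  set A : Fin (N + 1) → Set (Fin (N + 1) → ℝ) := fun j => {x | R x j ≤ k} with hAdef
  have hA : ∀ j, MeasurableSet (A j) := fun j =>
    (measurable_R j) measurableSet_Iic
  -- rewrite the event
  have hset : {ω | ((Nat.card {i : Fin N | X ω i.castSucc ≤ X ω (Fin.last N)} : ℝ) + 1) / (N + 1)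
      ≤ lam} = X ⁻¹' (A (Fin.last N)) := by
    ext ω
    simp only [Set.mem_setOf_eq, Set.mem_preimage, hAdef]
    have hcard : Nat.card {i : Fin N | X ω i.castSucc ≤ X ω (Fin.last N)}
        = (Finset.univ.filter fun i : Fin N => X ω i.castSucc ≤ X ω (Fin.last N)).card := by
      simp [Nat.card_eq_fintype_card, Fintype.card_subtype]
    rw [hcard, div_le_iff₀ hNpos, R_last]
    rw [show ((Finset.univ.filter fun i : Fin N =>
        X ω i.castSucc ≤ X ω (Fin.last N)).card : ℝ) + 1
      = (((Finset.univ.filter fun i : Fin N =>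
        X ω i.castSucc ≤ X ω (Fin.last N)).card + 1 : ℕ) : ℝ) by push_cast; ring]
    exact (Nat.le_floor_iff (by positivity)).symm
  rw [hset, ← Measure.map_apply hX (hA _), ← hμdef]
  -- exchangeability on μ
  have hperm : ∀ σ : Equiv.Perm (Fin (N + 1)),
      Measure.map (fun x : Fin (N + 1) → ℝ => x ∘ σ) μ = μ := by
    intro σ
    have hg : Measurable fun x : Fin (N + 1) → ℝ => x ∘ σ :=
      measurable_pi_lambda _ fun i => measurable_pi_apply (σ i)
    rw [hμdef, Measure.map_map hg hX]
    exact hexch σ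
  have hkey : ∀ j, μ (A j) = μ (A (Fin.last N)) := by
    intro j
    set σ := Equiv.swap (Fin.last N) j with hσ
    have h1 : μ (A (Fin.last N)) = μ ((fun x : Fin (N + 1) → ℝ => x ∘ σ) ⁻¹' A (Fin.last N)) := by
      conv_lhs => rw [← hperm σ]
      exact Measure.map_apply (measurable_pi_lambda _ fun i => measurable_pi_apply (σ i))
        (hA _)
    have h2 : (fun x : Fin (N + 1) → ℝ => x ∘ σ) ⁻¹' A (Fin.last N) = A j := by
      ext x
      simp only [Set.mem_preimage, hAdef, Set.mem_setOf_eq, R_comp]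
      rw [hσ, Equiv.swap_apply_left]
    rw [h1, h2]
  -- sum bound
  have hsum_le : ∑ j : Fin (N + 1), μ (A j) ≤ (k : ℝ≥0∞) := by
    calc ∑ j : Fin (N + 1), μ (A j)
        = ∫⁻ x, ∑ j, (A j).indicator (1 : (Fin (N+1) → ℝ) → ℝ≥0∞) x ∂μ := by
          rw [lintegral_finset_sum _ (fun j _ => measurable_one.indicator (hA j))]
          exact Finset.sum_congr rfl fun j _ => (lintegral_indicator_one (hA j)).symm
      _ ≤ ∫⁻ _, (k : ℝ≥0∞) ∂μ := by
          apply lintegral_mono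
          intro x
          dsimp only
          have heq : ∑ j : Fin (N + 1), (A j).indicator (1 : (Fin (N+1) → ℝ) → ℝ≥0∞) x
              = ((Finset.univ.filter fun j => R x j ≤ k).card : ℝ≥0∞) := by
            rw [Finset.card_filter, Nat.cast_sum]
            apply Finset.sum_congr rfl
            intro j _
            simp only [Set.indicator_apply, hAdef, Set.mem_setOf_eq]
            split_ifs <;> simp
          rw [heq]
          exact_mod_cast Nat.cast_le.mpr (card_rank_le x k)
      _ = (k : ℝ≥0∞) := by simp
  have hsum_eq : ∑ j : Fin (N + 1), μ (A j) = ((N : ℝ≥0∞) + 1) * μ (A (Fin.last N)) := by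
    rw [Finset.sum_congr rfl fun j _ => hkey j, Finset.sum_const, Finset.card_univ,
      Fintype.card_fin, nsmul_eq_mul]
    push_cast
    ring
  have hmul : ((N : ℝ≥0∞) + 1) * μ (A (Fin.last N)) ≤ (k : ℝ≥0∞) := hsum_eq ▸ hsum_le
  have hdiv : μ (A (Fin.last N)) ≤ (k : ℝ≥0∞) / ((N : ℝ≥0∞) + 1) := by
    rw [ENNReal.le_div_iff_mul_le (Or.inl (by simp)) (Or.inl (by simp))]
    rw [mul_comm]
    exact hmul
  refine hdiv.trans ?_
  have hkle : (k : ℝ) ≤ lam * ((N : ℝ) + 1) := Nat.floor_le (by positivity)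
  have hcast1 : ((k : ℝ≥0∞)) = ENNReal.ofReal (k : ℝ) := by simp
  have hcast2 : ((N : ℝ≥0∞) + 1) = ENNReal.ofReal ((N : ℝ) + 1) := by
    rw [ENNReal.ofReal_add (by positivity) zero_le_one]
    simp
  rw [hcast1, hcast2, ← ENNReal.ofReal_div_of_pos hNpos]
  exact ENNReal.ofReal_le_ofReal ((div_le_iff₀ hNpos).mpr (by linarith))
end

section
/- Let $s_1, \dots, s_N$ be i.i.d. real random variables with common cdf $F$, let $\alpha \in (0,1)$, set $k = \lceil \alpha(N+1) - 1 \rceil$, let $s_{(k)}$ denote the $k$-th order statistic, and let $\hat F_N$ denote the empirical cdf. Then for any $\delta \in (0,1)$, with probability at least $1 - \delta$, $|\alpha - F(s_{(k)}^-)| \le \max(\alpha, 1-\alpha)/N + |k/N - \hat F_N(s_{(k)}^-)| + \sqrt{\ln(2/\delta)/(2N)}$, where $F(s^-)$ denotes the left limit of $F$ at $s$. -/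
open MeasureTheory ENNReal Real

open MeasureTheory ENNReal

lemma lintegral_pi_pow (ν : Measure ℝ) [SigmaFinite ν] (g : ℝ → ℝ≥0∞)
    (hg : Measurable g) : ∀ n : ℕ,
    ∫⁻ ω, ∏ i, g (ω i) ∂(Measure.pi fun _ : Fin n => ν) = (∫⁻ x, g x ∂ν) ^ n := by
  intro n
  induction n with
  | zero => simp
  | succ n ih =>
    have hmp := measurePreserving_piFinSuccAbove (fun _ : Fin (n + 1) => ν) 0
    have hF : Measurable (fun y : ℝ × (Fin n → ℝ) => g y.1 * ∏ j, g (y.2 j)) := by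
      apply Measurable.mul
      · exact hg.comp measurable_fst
      · exact Finset.measurable_prod _ fun j _ =>
          hg.comp ((measurable_pi_apply j).comp measurable_snd)
    have key := hmp.lintegral_comp hF
    have heq : ∀ x : Fin (n+1) → ℝ,
        (fun y : ℝ × (Fin n → ℝ) => g y.1 * ∏ j, g (y.2 j))
          ((MeasurableEquiv.piFinSuccAbove (fun _ => ℝ) 0) x) = ∏ i, g (x i) := by
      intro x
      simp only [MeasurableEquiv.piFinSuccAbove_apply, Fin.insertNthEquiv,
        Equiv.coe_fn_symm_mk, Fin.removeNth, Fin.zero_succAbove]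
      rw [Fin.prod_univ_succ]
    calc ∫⁻ ω, ∏ i, g (ω i) ∂(Measure.pi fun _ : Fin (n+1) => ν)
        = ∫⁻ x, (fun y : ℝ × (Fin n → ℝ) => g y.1 * ∏ j, g (y.2 j))
            ((MeasurableEquiv.piFinSuccAbove (fun _ => ℝ) 0) x)
            ∂(Measure.pi fun _ : Fin (n+1) => ν) := by
          apply lintegral_congr; intro x; rw [heq]
      _ = ∫⁻ y, g y.1 * ∏ j, g (y.2 j)
            ∂((ν).prod (Measure.pi fun _ : Fin n => ν)) := key
      _ = (∫⁻ x, g x ∂ν) * ∫⁻ z, ∏ j, g (z j) ∂(Measure.pi fun _ : Fin n => ν) := by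
          exact lintegral_prod_mul (f := g) (g := fun z : Fin n → ℝ => ∏ j, g (z j))
            hg.aemeasurable
            (Finset.measurable_prod _ fun j _ => hg.comp (measurable_pi_apply j)).aemeasurable
      _ = (∫⁻ x, g x ∂ν) ^ (n + 1) := by rw [ih]; ring

open Real

/-- Hoeffding's lemma for Bernoulli: the mgf bound. -/
lemma bern_mgf {q l : ℝ} (h0 : 0 ≤ q) (h1 : q ≤ 1) (hl : 0 ≤ l) :
    1 - q + q * Real.exp l ≤ Real.exp (l * q + l ^ 2 / 8) := by
  set u : ℝ → ℝ := fun x => 1 - q + q * Real.exp x with hu_def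
  have hu_pos : ∀ x, 0 ≤ x → (1:ℝ) ≤ u x := by
    intro x hx
    have h : (1:ℝ) ≤ Real.exp x := Real.one_le_exp hx
    show (1:ℝ) ≤ 1 - q + q * Real.exp x
    nlinarith [Real.exp_pos x]
  have hu_ne : ∀ x, 0 ≤ x → u x ≠ 0 := fun x hx =>
    ne_of_gt (lt_of_lt_of_le one_pos (hu_pos x hx))
  -- the function F and its derivative G
  set F : ℝ → ℝ := fun x => x * q + x ^ 2 / 8 - Real.log (u x) with hF_def
  set G : ℝ → ℝ := fun x => q + x / 4 - q * Real.exp x / u x with hG_def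
  have hu_deriv : ∀ x, HasDerivAt u (q * Real.exp x) x := by
    intro x
    exact ((Real.hasDerivAt_exp x).const_mul q).const_add (1 - q)
  have hF_deriv : ∀ x, 0 ≤ x → HasDerivAt F (G x) x := by
    intro x hx
    have h1' : HasDerivAt (fun y : ℝ => y * q + y ^ 2 / 8) (q + x * 2 / 8) x := by
      have ha : HasDerivAt (fun y : ℝ => y * q) q x := by
        simpa using (hasDerivAt_id x).mul_const q
      have hb : HasDerivAt (fun y : ℝ => y ^ 2 / 8) (2 * x ^ 1 / 8) x := by
        exact (hasDerivAt_pow 2 x).div_const 8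
      exact (ha.add hb).congr_deriv (by ring)
    have h2' : HasDerivAt (fun y => Real.log (u y)) (q * Real.exp x / u x) x :=
      (hu_deriv x).log (hu_ne x hx)
    have := h1'.sub h2'
    exact this.congr_deriv (by show _ = q + x / 4 - q * Real.exp x / u x; ring)
  -- G has nonneg derivative on [0,∞)
  have hG_deriv : ∀ x, 0 ≤ x →
      HasDerivAt G (1/4 - q * Real.exp x * (1 - q) / (u x)^2) x := by
    intro x hx
    have ha : HasDerivAt (fun y : ℝ => q + y / 4) (1/4) x := by
      simpa using ((hasDerivAt_id x).div_const 4).const_add q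
    have hb : HasDerivAt (fun y => q * Real.exp y) (q * Real.exp x) x :=
      (Real.hasDerivAt_exp x).const_mul q
    have hc : HasDerivAt (fun y => q * Real.exp y / u y)
        ((q * Real.exp x * u x - q * Real.exp x * (q * Real.exp x)) / (u x)^2) x :=
      hb.div (hu_deriv x) (hu_ne x hx)
    have := ha.sub hc
    have hne := hu_ne x hx
    exact this.congr_deriv (by rw [show u x = 1 - q + q * Real.exp x from rfl]; ring)
  have hG_deriv_nonneg : ∀ x, 0 ≤ x → 0 ≤ 1/4 - q * Real.exp x * (1 - q) / (u x)^2 := by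
    intro x hx
    have hne := hu_pos x hx
    have hupos : (0:ℝ) < u x := by linarith
    rw [sub_nonneg, div_le_iff₀ (by positivity)]
    have h : (0:ℝ) ≤ ((1 - q) - q * Real.exp x)^2 := sq_nonneg _
    have : u x = (1 - q) + q * Real.exp x := rfl
    nlinarith [Real.exp_pos x]
  -- G is monotone on [0,∞), G 0 = 0
  have hG0 : G 0 = 0 := by
    simp only [hG_def, hu_def]
    norm_num
  have hGmono : MonotoneOn G (Set.Ici (0:ℝ)) := by
    apply monotoneOn_of_deriv_nonneg (convex_Ici 0)
    · exact fun x hx => (hG_deriv x hx).continuousAt.continuousWithinAt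
    · intro x hx
      rw [interior_Ici] at hx
      exact (hG_deriv x (le_of_lt hx)).differentiableAt.differentiableWithinAt
    · intro x hx
      rw [interior_Ici] at hx
      rw [(hG_deriv x (le_of_lt hx)).deriv]
      exact hG_deriv_nonneg x (le_of_lt hx)
  have hGnonneg : ∀ x, 0 ≤ x → 0 ≤ G x := by
    intro x hx
    have := hGmono (Set.self_mem_Ici) (Set.mem_Ici.2 hx) hx
    rwa [hG0] at this
  -- F is monotone on [0,∞), F 0 = 0
  have hFmono : MonotoneOn F (Set.Ici (0:ℝ)) := by
    apply monotoneOn_of_deriv_nonneg (convex_Ici 0)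
    · exact fun x hx => (hF_deriv x hx).continuousAt.continuousWithinAt
    · intro x hx
      rw [interior_Ici] at hx
      exact (hF_deriv x (le_of_lt hx)).differentiableAt.differentiableWithinAt
    · intro x hx
      rw [interior_Ici] at hx
      rw [(hF_deriv x (le_of_lt hx)).deriv]
      exact hGnonneg x (le_of_lt hx)
  have hF0 : F 0 = 0 := by
    simp only [hF_def, hu_def]
    norm_num
  have hFl : 0 ≤ F l := by
    have := hFmono (Set.self_mem_Ici) (Set.mem_Ici.2 hl) hl
    rwa [hF0] at this
  -- conclude
  have hul : (0:ℝ) < u l := lt_of_lt_of_le one_pos (hu_pos l hl)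
  have : Real.log (u l) ≤ l * q + l ^ 2 / 8 := by
    simp only [hF_def] at hFl
    linarith
  calc u l ≤ Real.exp (Real.log (u l)) := by rw [Real.exp_log hul]
    _ ≤ Real.exp (l * q + l ^ 2 / 8) := Real.exp_le_exp.2 this

noncomputable def cnt {N : ℕ} (S : Set ℝ) (ω : Fin N → ℝ) : ℕ :=
  Nat.card {i : Fin N // ω i ∈ S}

lemma cnt_eq_filter {N : ℕ} (S : Set ℝ) (ω : Fin N → ℝ) [DecidablePred (· ∈ S)] :
    cnt S ω = (Finset.univ.filter (fun i => ω i ∈ S)).card := by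
  rw [cnt, Nat.card_eq_fintype_card]
  convert Fintype.card_subtype (p := fun i => ω i ∈ S)

lemma cnt_mono {N : ℕ} {S T : Set ℝ} (h : S ⊆ T) (ω : Fin N → ℝ) :
    cnt S ω ≤ cnt T ω := by
  classical
  rw [cnt_eq_filter, cnt_eq_filter]
  apply Finset.card_le_card
  intro i hi
  simp only [Finset.mem_filter] at *
  exact ⟨hi.1, h hi.2⟩

lemma cnt_le {N : ℕ} (S : Set ℝ) (ω : Fin N → ℝ) : cnt S ω ≤ N := by
  classical
  rw [cnt_eq_filter]
  exact le_trans (Finset.card_filter_le _ _) (by simp)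

lemma cnt_add_compl {N : ℕ} (S : Set ℝ) (ω : Fin N → ℝ) :
    cnt S ω + cnt Sᶜ ω = N := by
  classical
  rw [cnt_eq_filter, cnt_eq_filter]
  have hd : Disjoint (Finset.univ.filter (fun i => ω i ∈ S))
      (Finset.univ.filter (fun i => ω i ∈ Sᶜ)) := by
    rw [Finset.disjoint_filter]
    intro i _ h
    simp [h]
  have hu : (Finset.univ.filter (fun i => ω i ∈ S)) ∪
      (Finset.univ.filter (fun i => ω i ∈ Sᶜ)) = Finset.univ := by
    ext i; simp [em]
  calc (Finset.univ.filter (fun i => ω i ∈ S)).card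
        + (Finset.univ.filter (fun i => ω i ∈ Sᶜ)).card
      = ((Finset.univ.filter (fun i => ω i ∈ S)) ∪
          (Finset.univ.filter (fun i => ω i ∈ Sᶜ))).card :=
        (Finset.card_union_of_disjoint hd).symm
    _ = (Finset.univ : Finset (Fin N)).card := by rw [hu]
    _ = N := Finset.card_fin N

lemma cnt_measurable {N : ℕ} (S : Set ℝ) (hS : MeasurableSet S) :
    Measurable (fun ω : Fin N → ℝ => cnt S ω) := by
  classical
  have h : (fun ω : Fin N → ℝ => cnt S ω)
      = fun ω => ∑ i : Fin N, if ω i ∈ S then 1 else 0 := by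
    ext ω; rw [cnt_eq_filter, Finset.card_filter]
  rw [h]
  apply Finset.measurable_sum
  intro i _
  have : Measurable (fun x : ℝ => if x ∈ S then (1:ℕ) else 0) :=
    Measurable.ite hS measurable_const measurable_const
  exact this.comp (measurable_pi_apply i)

section chernoff

variable {ν : Measure ℝ} [IsProbabilityMeasure ν] {N : ℕ}

lemma chernoff_upper (S : Set ℝ) (hS : MeasurableSet S) {ε : ℝ} (hε : 0 < ε) :
    (Measure.pi fun _ : Fin N => ν)
      {ω | (N:ℝ) * ((ν S).toReal + ε) < (cnt S ω : ℝ)}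
      ≤ ENNReal.ofReal (Real.exp (-(2 * N * ε^2))) := by
  classical
  have hq0 : 0 ≤ (ν S).toReal := ENNReal.toReal_nonneg
  have hq1 : (ν S).toReal ≤ 1 :=
    ENNReal.toReal_le_of_le_ofReal one_pos.le (by simpa using prob_le_one (μ := ν) (s := S))
  have hl : (0:ℝ) ≤ 4 * ε := by positivity
  have hh_meas : Measurable (fun x : ℝ =>
      if x ∈ S then ENNReal.ofReal (Real.exp (4*ε)) else 1) :=
    Measurable.ite hS measurable_const measurable_const
  -- single-coordinate integral
  have hint : ∫⁻ x, (if x ∈ S then ENNReal.ofReal (Real.exp (4*ε)) else 1) ∂ν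
      ≤ ENNReal.ofReal (Real.exp ((4*ε) * (ν S).toReal + (4*ε)^2/8)) := by
    have hsplit := (lintegral_add_compl
      (fun x => if x ∈ S then ENNReal.ofReal (Real.exp (4*ε)) else 1) hS (μ := ν)).symm
    have h1 : ∫⁻ x in S, (if x ∈ S then ENNReal.ofReal (Real.exp (4*ε)) else 1) ∂ν
        = ENNReal.ofReal (Real.exp (4*ε)) * ν S := by
      rw [setLIntegral_congr_fun hS
        (fun x hx => by rw [if_pos hx] :
          ∀ x ∈ S, (if x ∈ S then ENNReal.ofReal (Real.exp (4*ε)) else 1)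
            = ENNReal.ofReal (Real.exp (4*ε)))]
      simp [mul_comm]
    have h2 : ∫⁻ x in Sᶜ, (if x ∈ S then ENNReal.ofReal (Real.exp (4*ε)) else 1) ∂ν
        = ν Sᶜ := by
      rw [setLIntegral_congr_fun hS.compl
        (fun x hx => by rw [if_neg hx] :
          ∀ x ∈ Sᶜ, (if x ∈ S then ENNReal.ofReal (Real.exp (4*ε)) else 1) = 1)]
      simp
    have hScompl : ν Sᶜ = ENNReal.ofReal (1 - (ν S).toReal) := by
      rw [measure_compl hS (measure_ne_top ν S), measure_univ,
        ENNReal.ofReal_sub _ ENNReal.toReal_nonneg, ENNReal.ofReal_one,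
        ENNReal.ofReal_toReal (measure_ne_top ν S)]
    have hSq : ν S = ENNReal.ofReal ((ν S).toReal) :=
      (ENNReal.ofReal_toReal (measure_ne_top ν S)).symm
    rw [hsplit, h1, h2, hScompl]
    nth_rewrite 1 [hSq]
    rw [← ENNReal.ofReal_mul (Real.exp_pos _).le,
      ← ENNReal.ofReal_add (by nlinarith [Real.exp_pos (4*ε), (ν S).toReal, hq0] :
          (0:ℝ) ≤ Real.exp (4*ε) * (ν S).toReal) (by linarith)]
    apply ENNReal.ofReal_le_ofReal
    have := bern_mgf hq0 hq1 hl
    linarith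
  -- product integral
  have hprod : ∫⁻ ω, ∏ i, (if ω i ∈ S then ENNReal.ofReal (Real.exp (4*ε)) else 1)
        ∂(Measure.pi fun _ : Fin N => ν)
      ≤ ENNReal.ofReal (Real.exp ((N:ℝ) * ((4*ε) * (ν S).toReal + (4*ε)^2/8))) := by
    rw [lintegral_pi_pow ν _ hh_meas N]
    calc (∫⁻ x, (if x ∈ S then ENNReal.ofReal (Real.exp (4*ε)) else 1) ∂ν) ^ N
        ≤ (ENNReal.ofReal (Real.exp ((4*ε) * (ν S).toReal + (4*ε)^2/8))) ^ N :=
          pow_le_pow_left' hint N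
      _ = _ := by
          rw [← ENNReal.ofReal_pow (Real.exp_pos _).le, ← Real.exp_nat_mul]
  -- pointwise: ∏ h = A ^ cnt
  have hW : ∀ ω : Fin N → ℝ,
      ∏ i, (if ω i ∈ S then ENNReal.ofReal (Real.exp (4*ε)) else 1)
        = ENNReal.ofReal (Real.exp (4*ε)) ^ (cnt S ω) := by
    intro ω
    rw [cnt_eq_filter]
    rw [Finset.prod_ite, Finset.prod_const, Finset.prod_const, one_pow, mul_one]
  -- event inclusion
  have hincl : {ω : Fin N → ℝ | (N:ℝ) * ((ν S).toReal + ε) < (cnt S ω : ℝ)}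
      ⊆ {ω : Fin N → ℝ |
          ENNReal.ofReal (Real.exp ((4*ε) * ((N:ℝ) * ((ν S).toReal + ε))))
          ≤ ∏ i, (if ω i ∈ S then ENNReal.ofReal (Real.exp (4*ε)) else 1)} := by
    intro ω hω
    simp only [Set.mem_setOf_eq] at *
    rw [hW ω, ← ENNReal.ofReal_pow (Real.exp_pos _).le, ← Real.exp_nat_mul]
    apply ENNReal.ofReal_le_ofReal
    apply Real.exp_le_exp.2
    have h1 : (N:ℝ) * ((ν S).toReal + ε) ≤ (cnt S ω : ℝ) := le_of_lt hω
    nlinarith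
  have hmeasW : Measurable (fun ω : Fin N → ℝ =>
      ∏ i, (if ω i ∈ S then ENNReal.ofReal (Real.exp (4*ε)) else 1)) :=
    Finset.measurable_prod _ fun i _ => hh_meas.comp (measurable_pi_apply i)
  have hmarkov := mul_meas_ge_le_lintegral₀ (μ := Measure.pi fun _ : Fin N => ν)
    hmeasW.aemeasurable
    (ENNReal.ofReal (Real.exp ((4*ε) * ((N:ℝ) * ((ν S).toReal + ε)))))
  have hstep : ENNReal.ofReal (Real.exp ((4*ε) * ((N:ℝ) * ((ν S).toReal + ε)))) *
      (Measure.pi fun _ : Fin N => ν)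
        {ω | (N:ℝ) * ((ν S).toReal + ε) < (cnt S ω : ℝ)}
      ≤ ENNReal.ofReal (Real.exp ((N:ℝ) * ((4*ε) * (ν S).toReal + (4*ε)^2/8))) :=
    le_trans (mul_le_mul_right (measure_mono hincl) _) (le_trans hmarkov hprod)
  have hexp_ne : ENNReal.ofReal
      (Real.exp ((4*ε) * ((N:ℝ) * ((ν S).toReal + ε)))) ≠ 0 := by
    simp [Real.exp_pos]
  have hfin := (ENNReal.le_div_iff_mul_le (Or.inl hexp_ne)
    (Or.inl ENNReal.ofReal_ne_top)).2 ((mul_comm _ _).trans_le hstep)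
  refine le_trans hfin ?_
  rw [← ENNReal.ofReal_div_of_pos (Real.exp_pos _), ← Real.exp_sub]
  apply ENNReal.ofReal_le_ofReal
  apply Real.exp_le_exp.2
  nlinarith [sq_nonneg ε, hq0]

lemma chernoff_lower (S : Set ℝ) (hS : MeasurableSet S) {ε : ℝ} (hε : 0 < ε) :
    (Measure.pi fun _ : Fin N => ν)
      {ω | (cnt S ω : ℝ) < (N:ℝ) * ((ν S).toReal - ε)}
      ≤ ENNReal.ofReal (Real.exp (-(2 * N * ε^2))) := by
  have hcompl : ∀ ω : Fin N → ℝ, (cnt S ω : ℝ) < (N:ℝ) * ((ν S).toReal - ε) →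
      (N:ℝ) * ((ν Sᶜ).toReal + ε) < (cnt Sᶜ ω : ℝ) := by
    intro ω hω
    have hsum : (cnt S ω : ℝ) + (cnt Sᶜ ω : ℝ) = (N:ℝ) := by
      rw [← Nat.cast_add, cnt_add_compl]
    have hνc : (ν Sᶜ).toReal = 1 - (ν S).toReal := by
      rw [measure_compl hS (measure_ne_top ν S),
        ENNReal.toReal_sub_of_le (by simpa using prob_le_one (μ := ν) (s := S))
          (by simp)]
      simp
    rw [hνc]
    nlinarith
  calc (Measure.pi fun _ : Fin N => ν) {ω | (cnt S ω : ℝ) < (N:ℝ) * ((ν S).toReal - ε)}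
      ≤ (Measure.pi fun _ : Fin N => ν)
        {ω | (N:ℝ) * ((ν Sᶜ).toReal + ε) < (cnt Sᶜ ω : ℝ)} :=
        measure_mono (fun ω hω => hcompl ω hω)
    _ ≤ _ := chernoff_upper Sᶜ hS.compl hε

end chernoff

lemma cnt_event_measurable {N : ℕ} (S : Set ℝ) (hS : MeasurableSet S) (P : ℕ → Prop) :
    MeasurableSet {ω : Fin N → ℝ | P (cnt S ω)} :=
  (cnt_measurable S hS) (MeasurableSpace.measurableSet_top)

section cdf

open Set

variable {ν : Measure ℝ} [IsProbabilityMeasure ν]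

lemma meas_Iio_mono {x y : ℝ} (h : x ≤ y) : (ν (Iio x)).toReal ≤ (ν (Iio y)).toReal :=
  ENNReal.toReal_mono (measure_ne_top ν _) (measure_mono (Set.Iio_subset_Iio h))

lemma meas_Iic_le_Iio {x y : ℝ} (h : x < y) : (ν (Iic x)).toReal ≤ (ν (Iio y)).toReal :=
  ENNReal.toReal_mono (measure_ne_top ν _) (measure_mono (fun z hz => lt_of_le_of_lt hz h))

/-- Construction of the fixed threshold `x̂` used for the lower deviation event. -/
lemma exists_xhat (ν : Measure ℝ) [IsProbabilityMeasure ν] {θ : ℝ} (hθ0 : 0 < θ) (hθ1 : θ < 1) :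
    ∃ b : ℝ, (ν (Iio b)).toReal ≤ θ ∧ ∀ s : ℝ, (ν (Iio s)).toReal < θ → s ≤ b := by
  set E : Set ℝ := {x | θ ≤ (ν (Iio x)).toReal} with hE_def
  -- nonempty
  have hne : E.Nonempty := by
    have h1 : Filter.Tendsto (fun x : ℝ => ν (Iic x)) Filter.atTop (nhds (ν univ)) :=
      tendsto_measure_Iic_atTop ν
    rw [measure_univ] at h1
    have h2 : ENNReal.ofReal θ < 1 := by
      rw [← ENNReal.ofReal_one]
      exact ENNReal.ofReal_lt_ofReal_iff_of_nonneg hθ0.le |>.2 hθ1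
    have h3 := h1.eventually_const_lt h2
    obtain ⟨x₀, hx₀⟩ := h3.exists
    refine ⟨x₀ + 1, ?_⟩
    have h4 : ν (Iic x₀) ≤ ν (Iio (x₀ + 1)) := measure_mono (fun z hz => lt_of_le_of_lt hz (lt_add_one x₀))
    have h5 : ENNReal.ofReal θ < ν (Iio (x₀+1)) := lt_of_lt_of_le hx₀ h4
    have := ENNReal.toReal_mono (measure_ne_top ν _) h5.le
    rw [ENNReal.toReal_ofReal hθ0.le] at this
    exact this
  -- bddBelow
  have hbdd : BddBelow E := by
    have h1 : Filter.Tendsto (fun x : ℝ => ν (Ici x)) Filter.atBot (nhds (ν univ)) :=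
      tendsto_measure_Ici_atBot ν
    rw [measure_univ] at h1
    have h2 : ENNReal.ofReal (1 - θ) < 1 := by
      rw [← ENNReal.ofReal_one]
      exact ENNReal.ofReal_lt_ofReal_iff_of_nonneg (by linarith) |>.2 (by linarith)
    obtain ⟨x₁, hx₁⟩ := (h1.eventually_const_lt h2).exists
    refine ⟨x₁, fun y hy => ?_⟩
    by_contra hlt
    push_neg at hlt
    have hsub : Iio y ⊆ (Ici x₁)ᶜ := by
      intro z hz
      simp only [mem_compl_iff, mem_Ici, not_le]
      exact lt_of_lt_of_le hz (by linarith)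
    have hν : ν (Iio y) ≤ 1 - ν (Ici x₁) := by
      rw [← measure_univ (μ := ν), ← measure_compl (measurableSet_Ici) (measure_ne_top ν _)]
      exact measure_mono hsub
    have h6 : (ν (Iio y)).toReal < θ := by
      have h7 : 1 - ν (Ici x₁) ≤ ENNReal.ofReal (1 - (ν (Ici x₁)).toReal) := by
        rw [← ENNReal.ofReal_one, ← ENNReal.ofReal_toReal (measure_ne_top ν (Ici x₁)),
          ← ENNReal.ofReal_sub _ ENNReal.toReal_nonneg]
        rw [ENNReal.ofReal_toReal (measure_ne_top ν (Ici x₁))]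
      have h8 : (ν (Iio y)).toReal ≤ 1 - (ν (Ici x₁)).toReal := by
        have := le_trans hν h7
        have h9 := ENNReal.toReal_mono ENNReal.ofReal_ne_top this
        rwa [ENNReal.toReal_ofReal (by
          have : (ν (Ici x₁)).toReal ≤ 1 := by
            have := prob_le_one (μ := ν) (s := Ici x₁)
            exact ENNReal.toReal_le_of_le_ofReal one_pos.le (by simpa using this)
          linarith)] at h9
      have h10 : 1 - θ < (ν (Ici x₁)).toReal := by
        have := (ENNReal.toReal_lt_toReal ENNReal.ofReal_ne_top (measure_ne_top ν _)).2 hx₁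
        rwa [ENNReal.toReal_ofReal (by linarith)] at this
      linarith
    exact absurd hy (by simp only [hE_def, mem_setOf_eq]; linarith)
  refine ⟨sInf E, ?_, ?_⟩
  · -- left continuity bound
    have hseq : Iio (sInf E) = ⋃ n : ℕ, Iic (sInf E - 1/(n+1)) := by
      ext z
      simp only [mem_Iio, mem_iUnion, mem_Iic]
      constructor
      · intro hz
        obtain ⟨n, hn⟩ := exists_nat_one_div_lt (by linarith : 0 < sInf E - z)
        exact ⟨n, by push_cast at hn ⊢; linarith⟩
      · intro ⟨n, hn⟩
        have : (0:ℝ) < 1/(n+1) := by positivity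
        linarith
    have hbound : ∀ n : ℕ, ν (Iic (sInf E - 1/(n+1))) ≤ ENNReal.ofReal θ := by
      intro n
      have hpos : (0:ℝ) < 1/(n+1) := by positivity
      set y := sInf E - 1/(n+1)
      have hy : y < sInf E := by simp only [y]; linarith
      have hmid : (y + sInf E)/2 < sInf E := by linarith
      have hmid2 : y < (y + sInf E)/2 := by linarith
      have hnotmem : ((y + sInf E)/2) ∉ E := fun hmem => absurd (csInf_le hbdd hmem) (by linarith)
      have hlt : (ν (Iio ((y + sInf E)/2))).toReal < θ := by
        simp only [hE_def, mem_setOf_eq, not_le] at hnotmem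
        exact hnotmem
      calc ν (Iic y) ≤ ν (Iio ((y + sInf E)/2)) :=
            measure_mono (fun z hz => lt_of_le_of_lt hz hmid2)
        _ = ENNReal.ofReal ((ν (Iio ((y + sInf E)/2))).toReal) :=
            (ENNReal.ofReal_toReal (measure_ne_top ν _)).symm
        _ ≤ ENNReal.ofReal θ := ENNReal.ofReal_le_ofReal hlt.le
    have hmono : Monotone (fun n : ℕ => Iic (sInf E - 1/(n+1))) := by
      intro n m hnm
      apply Iic_subset_Iic.2
      have hc : (n:ℝ) ≤ m := by exact_mod_cast hnm
      have h1 := one_div_le_one_div_of_le (by positivity : (0:ℝ) < n+1)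
        (by linarith : (n:ℝ)+1 ≤ (m:ℝ)+1)
      linarith
    have htend := tendsto_measure_iUnion_atTop (μ := ν) hmono
    rw [← hseq] at htend
    have hlim : ν (Iio (sInf E)) ≤ ENNReal.ofReal θ :=
      le_of_tendsto htend (Filter.Eventually.of_forall hbound)
    have := ENNReal.toReal_mono ENNReal.ofReal_ne_top hlim
    rwa [ENNReal.toReal_ofReal hθ0.le] at this
  · intro s hs
    by_contra hgt
    push_neg at hgt
    obtain ⟨y, hyE, hys⟩ := (csInf_lt_iff hbdd hne).1 hgt
    have : θ ≤ (ν (Iio y)).toReal := hyE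
    have h2 := meas_Iio_mono (ν := ν) hys.le
    linarith

/-- Construction of the fixed threshold `x*` used for the upper deviation event. -/
lemma exists_xstar (ν : Measure ℝ) [IsProbabilityMeasure ν] {τ : ℝ} (hτ0 : 0 < τ) (hτ1 : τ < 1) :
    ∃ b : ℝ, τ ≤ (ν (Iic b)).toReal ∧ ∀ s : ℝ, τ < (ν (Iio s)).toReal → b < s := by
  set E : Set ℝ := {x | τ < (ν (Iio x)).toReal} with hE_def
  have hne : E.Nonempty := by
    have h1 : Filter.Tendsto (fun x : ℝ => ν (Iic x)) Filter.atTop (nhds (ν univ)) :=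
      tendsto_measure_Iic_atTop ν
    rw [measure_univ] at h1
    have h2 : ENNReal.ofReal τ < 1 := by
      rw [← ENNReal.ofReal_one]
      exact ENNReal.ofReal_lt_ofReal_iff_of_nonneg hτ0.le |>.2 hτ1
    obtain ⟨x₀, hx₀⟩ := (h1.eventually_const_lt h2).exists
    refine ⟨x₀ + 1, ?_⟩
    have h4 : ν (Iic x₀) ≤ ν (Iio (x₀ + 1)) :=
      measure_mono (fun z hz => lt_of_le_of_lt hz (lt_add_one x₀))
    have h5 : ENNReal.ofReal τ < ν (Iio (x₀+1)) := lt_of_lt_of_le hx₀ h4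
    have h6 := (ENNReal.toReal_lt_toReal ENNReal.ofReal_ne_top (measure_ne_top ν _)).2 h5
    rw [ENNReal.toReal_ofReal hτ0.le] at h6
    exact h6
  have hbdd : BddBelow E := by
    obtain ⟨b0, hb0⟩ : ∃ b0 : ℝ, (ν (Iio b0)).toReal ≤ τ/2 ∧
        ∀ s : ℝ, (ν (Iio s)).toReal < τ/2 → s ≤ b0 := by
      obtain ⟨b, h1, h2⟩ := exists_xhat ν (by linarith : (0:ℝ) < τ/2) (by linarith)
      exact ⟨b, h1, h2⟩
    refine ⟨b0, fun y hy => ?_⟩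
    by_contra hlt
    push_neg at hlt
    have : (ν (Iio y)).toReal ≤ (ν (Iio b0)).toReal := meas_Iio_mono hlt.le
    have : (ν (Iio y)).toReal ≤ τ/2 := le_trans this hb0.1
    have := hy
    simp only [hE_def, mem_setOf_eq] at this
    linarith
  refine ⟨sInf E, ?_, ?_⟩
  · -- right limit: ν (Iic (sInf E)) ≥ τ
    have hseq : Iic (sInf E) = ⋂ n : ℕ, Iio (sInf E + 1/(n+1)) := by
      ext z
      simp only [mem_Iic, mem_iInter, mem_Iio]
      constructor
      · intro hz n
        have : (0:ℝ) < 1/(n+1) := by positivity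
        linarith
      · intro h
        by_contra hz
        push_neg at hz
        obtain ⟨n, hn⟩ := exists_nat_one_div_lt (by linarith : 0 < z - sInf E)
        have := h n
        push_cast at hn this
        linarith
    have hbound : ∀ n : ℕ, ENNReal.ofReal τ ≤ ν (Iio (sInf E + 1/(n+1))) := by
      intro n
      have hpos : (0:ℝ) < 1/(n+1) := by positivity
      have hgt : sInf E < sInf E + 1/(n+1) := by linarith
      obtain ⟨y, hyE, hys⟩ := (csInf_lt_iff hbdd hne).1 hgt
      have h1 : τ < (ν (Iio y)).toReal := hyE
      calc ENNReal.ofReal τ ≤ ENNReal.ofReal ((ν (Iio y)).toReal) :=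
            ENNReal.ofReal_le_ofReal h1.le
        _ = ν (Iio y) := ENNReal.ofReal_toReal (measure_ne_top ν _)
        _ ≤ ν (Iio (sInf E + 1/(n+1))) := measure_mono (Iio_subset_Iio hys.le)
    have hanti : Antitone (fun n : ℕ => Iio (sInf E + 1/(n+1))) := by
      intro n m hnm
      apply Iio_subset_Iio
      have hc : (n:ℝ) ≤ m := by exact_mod_cast hnm
      have h1 := one_div_le_one_div_of_le (by positivity : (0:ℝ) < n+1)
        (by linarith : (n:ℝ)+1 ≤ (m:ℝ)+1)
      linarith
    have htend := tendsto_measure_iInter_atTop (μ := ν)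
      (fun n => (measurableSet_Iio).nullMeasurableSet) hanti ⟨0, measure_ne_top ν _⟩
    rw [← hseq] at htend
    have hlim : ENNReal.ofReal τ ≤ ν (Iic (sInf E)) :=
      ge_of_tendsto htend (Filter.Eventually.of_forall hbound)
    have := ENNReal.toReal_mono (measure_ne_top ν _) hlim
    rwa [ENNReal.toReal_ofReal hτ0.le] at this
  · intro s hs
    have hle : sInf E ≤ s := csInf_le hbdd hs
    rcases lt_or_eq_of_le hle with h | h
    · exact h
    · exfalso
      -- sInf E = s but Gr (sInf E) ≤ τ by left continuity
      have hleft : (ν (Iio (sInf E))).toReal ≤ τ := by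
        have hseq : Iio (sInf E) = ⋃ n : ℕ, Iic (sInf E - 1/(n+1)) := by
          ext z
          simp only [mem_Iio, mem_iUnion, mem_Iic]
          constructor
          · intro hz
            obtain ⟨n, hn⟩ := exists_nat_one_div_lt (by linarith : 0 < sInf E - z)
            exact ⟨n, by push_cast at hn ⊢; linarith⟩
          · intro ⟨n, hn⟩
            have : (0:ℝ) < 1/(n+1) := by positivity
            linarith
        have hbound : ∀ n : ℕ, ν (Iic (sInf E - 1/(n+1))) ≤ ENNReal.ofReal τ := by
          intro n
          have hpos : (0:ℝ) < 1/(n+1) := by positivity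
          set y := sInf E - 1/(n+1) with hy_def
          have hy : y < sInf E := by rw [hy_def]; linarith
          have hmid2 : y < (y + sInf E)/2 := by linarith
          have hmid : (y + sInf E)/2 < sInf E := by linarith
          have hnotmem : ((y + sInf E)/2) ∉ E := fun hmem =>
            absurd (csInf_le hbdd hmem) (by linarith)
          have hlt : (ν (Iio ((y + sInf E)/2))).toReal ≤ τ := by
            simp only [hE_def, mem_setOf_eq, not_lt] at hnotmem
            exact hnotmem
          calc ν (Iic y) ≤ ν (Iio ((y + sInf E)/2)) :=
                measure_mono (fun z hz => lt_of_le_of_lt hz hmid2)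
            _ = ENNReal.ofReal ((ν (Iio ((y + sInf E)/2))).toReal) :=
                (ENNReal.ofReal_toReal (measure_ne_top ν _)).symm
            _ ≤ ENNReal.ofReal τ := ENNReal.ofReal_le_ofReal hlt
        have hmono : Monotone (fun n : ℕ => Iic (sInf E - 1/(n+1))) := by
          intro n m hnm
          apply Iic_subset_Iic.2
          have hc : (n:ℝ) ≤ m := by exact_mod_cast hnm
          have h1 := one_div_le_one_div_of_le (by positivity : (0:ℝ) < n+1)
            (by linarith : (n:ℝ)+1 ≤ (m:ℝ)+1)
          linarith
        have htend := tendsto_measure_iUnion_atTop (μ := ν) hmono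
        rw [← hseq] at htend
        have hlim : ν (Iio (sInf E)) ≤ ENNReal.ofReal τ :=
          le_of_tendsto htend (Filter.Eventually.of_forall hbound)
        have := ENNReal.toReal_mono ENNReal.ofReal_ne_top hlim
        rwa [ENNReal.toReal_ofReal hτ0.le] at this
      rw [h] at hleft
      linarith

end cdf

/-- The `k`-th smallest value (counted with multiplicity) of `ω : Fin N → ℝ`. -/
noncomputable def orderStat {N : ℕ} (ω : Fin N → ℝ) (k : ℕ) : ℝ :=
  sInf {x : ℝ | k ≤ Nat.card {i : Fin N // ω i ≤ x}}

section orderstat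

open Set

variable {N : ℕ} {ω : Fin N → ℝ} {k : ℕ}

lemma orderStat_eq_cnt : orderStat ω k = sInf {x : ℝ | k ≤ cnt (Iic x) ω} := rfl

lemma orderStat_zero (hN : 1 ≤ N) : orderStat ω 0 = 0 := by
  rw [orderStat_eq_cnt]
  have h : {x : ℝ | 0 ≤ cnt (Iic x) ω} = univ := by
    ext x; simp
  rw [h]
  apply Real.sInf_of_not_bddBelow
  rintro ⟨b, hb⟩
  have := hb (mem_univ (b - 1))
  linarith

variable (hk1 : 1 ≤ k) (hkN : k ≤ N)

lemma finuniv_ne (hN : 0 < N) : (Finset.univ : Finset (Fin N)).Nonempty :=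
  ⟨⟨0, hN⟩, Finset.mem_univ _⟩

include hk1 hkN in
lemma orderStat_bddBelow : BddBelow {x : ℝ | k ≤ cnt (Iic x) ω} := by
  classical
  refine ⟨(Finset.univ.inf' (finuniv_ne (lt_of_lt_of_le (lt_of_lt_of_le one_pos hk1) hkN)) ω), fun y hy => ?_⟩
  simp only [mem_setOf_eq] at hy
  have hpos : 0 < cnt (Iic y) ω := lt_of_lt_of_le hk1 hy
  rw [cnt_eq_filter] at hpos
  obtain ⟨i, hi⟩ := Finset.card_pos.1 hpos
  simp only [Finset.mem_filter, Set.mem_Iic] at hi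
  exact le_trans (Finset.inf'_le ω (Finset.mem_univ i)) hi.2

include hk1 hkN in
lemma orderStat_nonempty : {x : ℝ | k ≤ cnt (Iic x) ω}.Nonempty := by
  classical
  refine ⟨Finset.univ.sup' (finuniv_ne (lt_of_lt_of_le (lt_of_lt_of_le one_pos hk1) hkN)) ω, ?_⟩
  simp only [mem_setOf_eq]
  have h : (Finset.univ.filter (fun i => ω i ∈ Iic (Finset.univ.sup' (finuniv_ne (lt_of_lt_of_le (lt_of_lt_of_le one_pos hk1) hkN)) ω)))
      = Finset.univ := by
    apply Finset.filter_true_of_mem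
    intro i _
    exact Finset.le_sup' ω (Finset.mem_univ i)
  rw [cnt_eq_filter, h, Finset.card_fin]
  exact hkN

include hk1 hkN in
lemma orderStat_le {x : ℝ} (h : k ≤ cnt (Iic x) ω) : orderStat ω k ≤ x := by
  rw [orderStat_eq_cnt]
  exact csInf_le (orderStat_bddBelow hk1 hkN) h

include hk1 hkN in
lemma cnt_Iic_orderStat : k ≤ cnt (Iic (orderStat ω k)) ω := by
  classical
  set s := orderStat ω k with hs_def
  by_cases hT : (Finset.univ.filter (fun i => s < ω i)).Nonempty
  · obtain ⟨i₀, hi₀mem, hi₀⟩ := Finset.exists_mem_eq_inf' hT ω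
    set z₀ := (Finset.univ.filter (fun i => s < ω i)).inf' hT ω with hz₀_def
    have hz₀gt : s < z₀ := by
      rw [hi₀]
      exact (Finset.mem_filter.1 hi₀mem).2
    set z := (s + min z₀ (s+1))/2 with hz_def
    have hmin : s < min z₀ (s+1) := lt_min hz₀gt (by linarith)
    have hsz : s < z := by rw [hz_def]; linarith
    have hzz₀ : z < z₀ := by
      have : min z₀ (s+1) ≤ z₀ := min_le_left _ _
      rw [hz_def]; linarith
    -- all samples ≤ z are in fact ≤ s
    have hsub : (Finset.univ.filter (fun i => ω i ∈ Iic z))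
        ⊆ (Finset.univ.filter (fun i => ω i ∈ Iic s)) := by
      intro i hi
      simp only [Finset.mem_filter, Set.mem_Iic] at *
      refine ⟨hi.1, ?_⟩
      by_contra hgt
      push_neg at hgt
      have hiT : i ∈ Finset.univ.filter (fun i => s < ω i) := by
        simp only [Finset.mem_filter]
        exact ⟨Finset.mem_univ i, hgt⟩
      have h4 : z₀ ≤ ω i := Finset.inf'_le ω hiT
      linarith [hi.2]
    -- there is a member of the set below z
    have hlt : s < z := hsz
    obtain ⟨y, hy, hyz⟩ := (csInf_lt_iff (orderStat_bddBelow hk1 hkN)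
      (orderStat_nonempty hk1 hkN)).1 hlt
    simp only [mem_setOf_eq] at hy
    have h1 : cnt (Iic y) ω ≤ cnt (Iic z) ω := cnt_mono (Iic_subset_Iic.2 hyz.le) ω
    have h2 : cnt (Iic z) ω ≤ cnt (Iic s) ω := by
      rw [cnt_eq_filter, cnt_eq_filter]
      exact Finset.card_le_card hsub
    omega
  · -- all samples ≤ s
    rw [Finset.not_nonempty_iff_eq_empty, Finset.filter_eq_empty_iff] at hT
    have h : (Finset.univ.filter (fun i => ω i ∈ Iic s)) = Finset.univ := by
      apply Finset.filter_true_of_mem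
      intro i _
      have := hT (Finset.mem_univ i)
      simpa using this
    rw [cnt_eq_filter, h, Finset.card_fin]
    exact hkN

include hk1 hkN in
lemma cnt_Iio_orderStat : cnt (Iio (orderStat ω k)) ω < k := by
  classical
  set s := orderStat ω k with hs_def
  by_contra hge
  push_neg at hge
  have hpos : 0 < cnt (Iio s) ω := lt_of_lt_of_le hk1 hge
  rw [cnt_eq_filter] at hpos
  obtain ⟨j₀, hj₀mem, hj₀⟩ := Finset.exists_mem_eq_sup'
    (Finset.card_pos.1 hpos) ω
  set y := (Finset.univ.filter (fun i => ω i ∈ Iio s)).sup'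
    (Finset.card_pos.1 hpos) ω with hy_def
  have hys : y < s := by
    rw [hj₀]
    exact (Finset.mem_filter.1 hj₀mem).2
  have hsub : (Finset.univ.filter (fun i => ω i ∈ Iio s))
      ⊆ (Finset.univ.filter (fun i => ω i ∈ Iic y)) := by
    intro i hi
    have h5 : ω i ≤ y := Finset.le_sup' ω hi
    simp only [Finset.mem_filter, Set.mem_Iic]
    exact ⟨Finset.mem_univ i, h5⟩
  have hcnt : k ≤ cnt (Iic y) ω := by
    rw [cnt_eq_filter]
    calc k ≤ cnt (Iio s) ω := hge
      _ = (Finset.univ.filter (fun i => ω i ∈ Iio s)).card := cnt_eq_filter _ ω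
      _ ≤ _ := Finset.card_le_card hsub
  have h6 := orderStat_le hk1 hkN hcnt
  have h7 : s ≤ y := h6
  linarith

end orderstat

set_option maxHeartbeats 1000000 in
/-- DKW-based concentration for the conformal quantile: for i.i.d. real draws from `ν`
(with cdf `F x = ν (Iic x)`), `k = ⌈α(N+1) - 1⌉` and `s_(k)` the `k`-th order statistic,
with probability at least `1 - δ`,
`|α - F(s_(k)⁻)| ≤ max(α,1-α)/N + |k/N - F̂_N(s_(k)⁻)| + √(ln(2/δ)/(2N))`,
where `F(s⁻) = ν (Iio s)` is the left limit and `F̂_N(s⁻) = |{i : sᵢ < s}|/N`. -/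
theorem conformal_quantile_concentration (ν : Measure ℝ) [IsProbabilityMeasure ν]
    (N : ℕ) (hN : 1 ≤ N) (α : ℝ) (hα : α ∈ Set.Ioo (0 : ℝ) 1)
    (δ : ℝ) (hδ : δ ∈ Set.Ioo (0 : ℝ) 1) :
    ENNReal.ofReal (1 - δ) ≤
      (Measure.pi fun _ : Fin N => ν)
        {ω | |α - (ν (Set.Iio (orderStat ω ⌈α * (N + 1) - 1⌉₊))).toReal|
          ≤ max α (1 - α) / N
            + |(⌈α * (N + 1) - 1⌉₊ : ℝ) / N
                - (Nat.card {i : Fin N // ω i < orderStat ω ⌈α * (N + 1) - 1⌉₊} : ℝ) / N|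
            + Real.sqrt (Real.log (2 / δ) / (2 * N))} := by
  obtain ⟨hα0, hα1⟩ := hα
  obtain ⟨hδ0, hδ1⟩ := hδ
  have hNpos : (0:ℝ) < N := by exact_mod_cast lt_of_lt_of_le one_pos hN
  set k := ⌈α * (N + 1) - 1⌉₊ with hk_def
  set ε := Real.sqrt (Real.log (2 / δ) / (2 * N)) with hε_def
  have hlog : 0 < Real.log (2/δ) := Real.log_pos (by rw [lt_div_iff₀ hδ0]; linarith)
  have hε : 0 < ε := by rw [hε_def]; exact Real.sqrt_pos.2 (by positivity)
  have hexpδ : Real.exp (-(2 * (N:ℝ) * ε^2)) = δ/2 := by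
    rw [hε_def, Real.sq_sqrt (by positivity)]
    rw [show -(2*(N:ℝ)*(Real.log (2/δ)/(2*N))) = -Real.log (2/δ) by field_simp]
    rw [Real.exp_neg, Real.exp_log (by positivity), inv_div]
  -- bounds on k
  have hk_le : (α * (N+1) - 1) ≤ k := Nat.le_ceil _
  have hk_lt : (k:ℝ) < α * (N+1) := by
    rcases le_or_gt (α * ((N:ℝ)+1) - 1) 0 with h | h
    · have h0 : k = 0 := by rw [hk_def]; exact_mod_cast Nat.ceil_eq_zero.2 (by exact_mod_cast h)
      rw [h0]
      push_cast
      positivity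
    · have h2 := Nat.ceil_lt_add_one h.le
      rw [← hk_def] at h2
      linarith
  have hkN : k ≤ N := by
    rw [hk_def, Nat.ceil_le]
    push_cast
    nlinarith
  have hkNR : (k:ℝ) ≤ N := by exact_mod_cast hkN
  have hmax1 : α ≤ max α (1-α) := le_max_left _ _
  have hmax2 : 1-α ≤ max α (1-α) := le_max_right _ _
  have habs_k : |α - (k:ℝ)/N| ≤ max α (1-α) / N := by
    rw [show α - (k:ℝ)/N = (α * N - k)/N by field_simp, abs_div, abs_of_pos hNpos,
      div_le_div_iff_of_pos_right hNpos]
    rw [abs_le]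
    constructor
    · nlinarith
    · nlinarith
  -- probability facts
  have hP01 : ∀ x : Set ℝ, (ν x).toReal ≤ 1 := by
    intro x
    exact ENNReal.toReal_le_of_le_ofReal one_pos.le (by simpa using prob_le_one (μ := ν) (s := x))
  have hP0 : ∀ x : Set ℝ, 0 ≤ (ν x).toReal := fun x => ENNReal.toReal_nonneg
  -- main reduction
  have main : ∃ B : Set (Fin N → ℝ), MeasurableSet B ∧
      (Measure.pi fun _ : Fin N => ν) B ≤ ENNReal.ofReal δ ∧
      ∀ ω, ω ∉ B → |α - (ν (Set.Iio (orderStat ω k))).toReal|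
        ≤ max α (1 - α) / N
          + |(k : ℝ) / N - (cnt (Set.Iio (orderStat ω k)) ω : ℝ) / N| + ε := by
    rcases Nat.eq_zero_or_pos k with hk0 | hk1
    · -- k = 0 case
      refine ⟨{ω | (cnt (Set.Iio 0) ω : ℝ) < (N:ℝ)*((ν (Set.Iio 0)).toReal - ε)}, ?_, ?_, ?_⟩
      · exact cnt_event_measurable _ measurableSet_Iio
          (fun n => (n:ℝ) < (N:ℝ)*((ν (Set.Iio 0)).toReal - ε))
      · refine le_trans (chernoff_lower _ measurableSet_Iio hε) ?_
        rw [hexpδ]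
        exact ENNReal.ofReal_le_ofReal (by linarith)
      · intro ω hω
        simp only [Set.mem_setOf_eq, not_lt] at hω
        rw [hk0, orderStat_zero hN]
        have hαk : α ≤ max α (1-α) / N := by
          have h1 : α * ((N:ℝ)+1) - 1 ≤ 0 := by
            rw [hk_def] at hk0
            exact_mod_cast Nat.ceil_eq_zero.1 hk0
          rw [le_div_iff₀ hNpos]
          nlinarith
        have hq : (ν (Set.Iio 0)).toReal - ε ≤ (cnt (Set.Iio 0) ω : ℝ)/N := by
          rw [le_div_iff₀ hNpos]
          nlinarith
        have habs0 : |((0:ℕ):ℝ)/(N:ℝ) - (cnt (Set.Iio 0) ω : ℝ)/N|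
            = (cnt (Set.Iio 0) ω : ℝ)/N := by
          rw [Nat.cast_zero, zero_div, zero_sub, abs_neg, abs_of_nonneg (by positivity)]
        rw [abs_le, habs0]
        have h3 : (0:ℝ) ≤ (cnt (Set.Iio 0) ω : ℝ)/N := by positivity
        constructor
        · nlinarith [hP01 (Set.Iio (0:ℝ))]
        · nlinarith [hP0 (Set.Iio (0:ℝ))]
    · -- k ≥ 1 case
      have hk1R : (1:ℝ) ≤ (k:ℝ) := by exact_mod_cast hk1
      have hcast : ∀ ω : Fin N → ℝ, (cnt (Set.Iio (orderStat ω k)) ω : ℝ) ≤ (k:ℝ) - 1 := by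
        intro ω
        have h2 : cnt (Set.Iio (orderStat ω k)) ω ≤ k - 1 :=
          Nat.le_pred_of_lt (cnt_Iio_orderStat hk1 hkN)
        have h3 : ((k - 1 : ℕ):ℝ) = (k:ℝ) - 1 := by
          rw [Nat.cast_sub hk1]; norm_num
        rw [← h3]
        exact_mod_cast h2
      -- event B₁ : controls P ω ≤ k/N + ε
      have hB1 : ∃ B : Set (Fin N → ℝ), MeasurableSet B ∧
          (Measure.pi fun _ : Fin N => ν) B ≤ ENNReal.ofReal (δ/2) ∧
          ∀ ω, ω ∉ B → (ν (Set.Iio (orderStat ω k))).toReal ≤ (k:ℝ)/N + ε := by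
        by_cases hτ : (k:ℝ)/N + ε < 1
        · obtain ⟨b, hbτ, hbs⟩ := exists_xstar ν
            (show 0 < (k:ℝ)/N + ε by positivity) hτ
          refine ⟨{ω | (cnt (Set.Iic b) ω : ℝ) < (N:ℝ)*((ν (Set.Iic b)).toReal - ε)},
            ?_, ?_, ?_⟩
          · exact cnt_event_measurable _ measurableSet_Iic
              (fun n => (n:ℝ) < (N:ℝ)*((ν (Set.Iic b)).toReal - ε))
          · refine le_trans (chernoff_lower _ measurableSet_Iic hε) ?_
            rw [hexpδ]
          · intro ω hω
            by_contra hgt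
            push_neg at hgt
            have hbs' := hbs (orderStat ω k) hgt
            have hcntlt : cnt (Set.Iic b) ω < k := by
              by_contra hge
              push_neg at hge
              have := orderStat_le hk1 hkN hge
              linarith
            apply hω
            show (cnt (Set.Iic b) ω : ℝ) < (N:ℝ)*((ν (Set.Iic b)).toReal - ε)
            have h1 : (cnt (Set.Iic b) ω : ℝ) ≤ (k:ℝ) - 1 := by
              have h2 : cnt (Set.Iic b) ω ≤ k - 1 := Nat.le_pred_of_lt hcntlt
              have h3 : ((k - 1 : ℕ):ℝ) = (k:ℝ) - 1 := by
                rw [Nat.cast_sub hk1]; norm_num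
              rw [← h3]
              exact_mod_cast h2
            have h2 : (k:ℝ)/N + ε ≤ (ν (Set.Iic b)).toReal := hbτ
            have h4 : (k:ℝ) ≤ (N:ℝ)*((ν (Set.Iic b)).toReal - ε) := by
              calc (k:ℝ) = (N:ℝ) * ((k:ℝ)/N) := by field_simp
                _ ≤ (N:ℝ) * ((ν (Set.Iic b)).toReal - ε) :=
                  mul_le_mul_of_nonneg_left (by linarith) hNpos.le
            linarith
        · refine ⟨∅, MeasurableSet.empty, by simp, ?_⟩
          intro ω _
          push_neg at hτ
          exact le_trans (hP01 _) hτ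
      -- event B₂ : controls m/N ≤ P ω + ε
      have hB2 : ∃ B : Set (Fin N → ℝ), MeasurableSet B ∧
          (Measure.pi fun _ : Fin N => ν) B ≤ ENNReal.ofReal (δ/2) ∧
          ∀ ω, ω ∉ B → (cnt (Set.Iio (orderStat ω k)) ω : ℝ)/N
            ≤ (ν (Set.Iio (orderStat ω k))).toReal + ε := by
        by_cases hθ : 0 < ((k:ℝ)-1)/N - ε
        · have hθ1 : ((k:ℝ)-1)/N - ε < 1 := by
            have h1 : ((k:ℝ)-1)/N < 1 := by
              rw [div_lt_one hNpos]; linarith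
            linarith
          obtain ⟨b, hbθ, hbs⟩ := exists_xhat ν hθ hθ1
          refine ⟨{ω | (N:ℝ)*((ν (Set.Iio b)).toReal + ε) < (cnt (Set.Iio b) ω : ℝ)},
            ?_, ?_, ?_⟩
          · exact cnt_event_measurable _ measurableSet_Iio
              (fun n => (N:ℝ)*((ν (Set.Iio b)).toReal + ε) < (n:ℝ))
          · refine le_trans (chernoff_upper _ measurableSet_Iio hε) ?_
            rw [hexpδ]
          · intro ω hω
            by_contra hgt
            push_neg at hgt
            have hm := hcast ω
            have h4 : (cnt (Set.Iio (orderStat ω k)) ω : ℝ)/N ≤ ((k:ℝ)-1)/N :=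
              (div_le_div_iff_of_pos_right hNpos).2 hm
            have hPθ : (ν (Set.Iio (orderStat ω k))).toReal < ((k:ℝ)-1)/N - ε := by
              linarith
            have hsb : orderStat ω k ≤ b := hbs _ hPθ
            rcases eq_or_lt_of_le hsb with heq | hlt
            · apply hω
              show (N:ℝ)*((ν (Set.Iio b)).toReal + ε) < (cnt (Set.Iio b) ω : ℝ)
              rw [← heq]
              rw [lt_div_iff₀ hNpos] at hgt
              linarith [hgt]
            · apply hω
              show (N:ℝ)*((ν (Set.Iio b)).toReal + ε) < (cnt (Set.Iio b) ω : ℝ)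
              have hk_le_cnt : k ≤ cnt (Set.Iio b) ω := by
                exact le_trans (cnt_Iic_orderStat (ω := ω) hk1 hkN)
                  (cnt_mono (fun z hz => lt_of_le_of_lt hz hlt) ω)
              have hcntR : (k:ℝ) ≤ (cnt (Set.Iio b) ω : ℝ) := by exact_mod_cast hk_le_cnt
              have h5 : (ν (Set.Iio b)).toReal ≤ ((k:ℝ)-1)/N - ε := hbθ
              have h7 : (N:ℝ)*((ν (Set.Iio b)).toReal + ε) ≤ (k:ℝ)-1 := by
                calc (N:ℝ)*((ν (Set.Iio b)).toReal + ε) ≤ (N:ℝ) * (((k:ℝ)-1)/N) :=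
                    mul_le_mul_of_nonneg_left (by linarith) hNpos.le
                  _ = (k:ℝ)-1 := by field_simp
              linarith
        · refine ⟨∅, MeasurableSet.empty, by simp, ?_⟩
          intro ω _
          push_neg at hθ
          have hm := hcast ω
          have h1 : (cnt (Set.Iio (orderStat ω k)) ω : ℝ)/N ≤ ((k:ℝ)-1)/N :=
            (div_le_div_iff_of_pos_right hNpos).2 hm
          have h2 := hP0 (Set.Iio (orderStat ω k))
          linarith
      obtain ⟨B₁, hB₁m, hB₁p, hB₁g⟩ := hB1
      obtain ⟨B₂, hB₂m, hB₂p, hB₂g⟩ := hB2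
      refine ⟨B₁ ∪ B₂, hB₁m.union hB₂m, ?_, ?_⟩
      · refine le_trans (measure_union_le _ _) ?_
        refine le_trans (add_le_add hB₁p hB₂p) ?_
        rw [← ENNReal.ofReal_add (by linarith) (by linarith)]
        apply ENNReal.ofReal_le_ofReal
        linarith
      · intro ω hω
        have hω₁ : ω ∉ B₁ := fun h => hω (Set.mem_union_left _ h)
        have hω₂ : ω ∉ B₂ := fun h => hω (Set.mem_union_right _ h)
        have hg₁ := hB₁g ω hω₁
        have hg₂ := hB₂g ω hω₂
        have hm := hcast ω
        have habs_m : |(k:ℝ)/N - (cnt (Set.Iio (orderStat ω k)) ω : ℝ)/N|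
            = (k:ℝ)/N - (cnt (Set.Iio (orderStat ω k)) ω : ℝ)/N := by
          apply abs_of_nonneg
          rw [sub_nonneg]
          exact (div_le_div_iff_of_pos_right hNpos).2 (by linarith)
        have h3 : (cnt (Set.Iio (orderStat ω k)) ω : ℝ)/N ≤ (k:ℝ)/N :=
          (div_le_div_iff_of_pos_right hNpos).2 (by linarith)
        rw [abs_le, habs_m]
        constructor
        · have h1 : -(|α - (k:ℝ)/N|) ≤ α - (k:ℝ)/N := neg_abs_le _
          linarith [habs_k, hg₁]
        · have h1 : α - (k:ℝ)/N ≤ |α - (k:ℝ)/N| := le_abs_self _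
          linarith [habs_k, hg₂]
  -- conclusion
  obtain ⟨B, hBmeas, hBprob, hBgood⟩ := main
  have hsub : Bᶜ ⊆ {ω : Fin N → ℝ | |α - (ν (Set.Iio (orderStat ω k))).toReal|
      ≤ max α (1 - α) / N
        + |(k : ℝ) / N - (Nat.card {i : Fin N // ω i < orderStat ω k} : ℝ) / N| + ε} := by
    intro ω hω
    exact hBgood ω hω
  calc ENNReal.ofReal (1 - δ) = 1 - ENNReal.ofReal δ := by
        rw [ENNReal.ofReal_sub _ hδ0.le, ENNReal.ofReal_one]
    _ ≤ 1 - (Measure.pi fun _ : Fin N => ν) B := tsub_le_tsub_left hBprob 1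
    _ = (Measure.pi fun _ : Fin N => ν) Bᶜ := (prob_compl_eq_one_sub hBmeas).symm
    _ ≤ _ := measure_mono hsub
end

section
/- With the Variation of Information $\mathcal{D}_{VI}$ defined via block entropies as $\mathcal{D}_{VI}(\theta,\theta') = 2H(\theta \wedge \theta') - H(\theta) - H(\theta')$, where $H(\theta) = -\sum_j \frac{|B_j|}{n}\log_2 \frac{|B_j|}{n}$ and $\theta \wedge \theta'$ is the common refinement (meet) of $\theta$ and $\theta'$, the function $\mathcal{D}_{VI}$ satisfies the triangle inequality: $\mathcal{D}_{VI}(\theta, \theta'') \le \mathcal{D}_{VI}(\theta, \theta') + \mathcal{D}_{VI}(\theta', \theta'')$ for all partitions $\theta, \theta', \theta''$ of a finite set of size $n$. -/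
/-- Base-2 entropy of the block-size distribution of a partition of `Fin n`
(encoded as a setoid): `H(θ) = -∑_B (|B|/n) log₂(|B|/n)`, written equivalently as
an average over elements, each contributing `log₂` of its block's relative size. -/
noncomputable def entH {n : ℕ} (r : Setoid (Fin n)) : ℝ :=
  -(1 / (n : ℝ)) * ∑ x : Fin n, Real.logb 2 ((Nat.card {y : Fin n // r.r x y} : ℝ) / n)

/-- Variation of Information via entropies: `VI(θ, θ') = 2H(θ ⊓ θ') - H(θ) - H(θ')`,
where `θ ⊓ θ'` is the common refinement (meet). -/
noncomputable def VIent {n : ℕ} (r r' : Setoid (Fin n)) : ℝ :=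
  2 * entH (r ⊓ r') - entH r - entH r'

open scoped Classical

/-- The block of `x` in the partition `r`, as a finset. -/
noncomputable def blk {n : ℕ} (r : Setoid (Fin n)) (x : Fin n) : Finset (Fin n) :=
  Finset.univ.filter (fun y => r.r x y)

lemma mem_blk {n : ℕ} {r : Setoid (Fin n)} {x y : Fin n} : y ∈ blk r x ↔ r.r x y := by
  simp [blk]

lemma blk_card_pos {n : ℕ} (r : Setoid (Fin n)) (x : Fin n) : 0 < (blk r x).card :=
  Finset.card_pos.mpr ⟨x, mem_blk.mpr (r.refl x)⟩

lemma blk_card_pos' {n : ℕ} (r : Setoid (Fin n)) (x : Fin n) : (0:ℝ) < ((blk r x).card : ℝ) := by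
  exact_mod_cast blk_card_pos r x

lemma blk_congr {n : ℕ} {r : Setoid (Fin n)} {x y : Fin n} (h : r.r x y) : blk r x = blk r y := by
  ext z
  simp only [mem_blk]
  exact ⟨fun hz => r.trans (r.symm h) hz, fun hz => r.trans h hz⟩

lemma inf_r {n : ℕ} {a b : Setoid (Fin n)} {x y : Fin n} :
    (a ⊓ b).r x y ↔ a.r x y ∧ b.r x y := Setoid.inf_iff_and

/-- `Lg u x = log₂(|block of x|/n)`. -/
noncomputable def Lg {n : ℕ} (u : Setoid (Fin n)) (x : Fin n) : ℝ :=
  Real.logb 2 (((blk u x).card : ℝ) / n)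

lemma entH_eq {n : ℕ} (r : Setoid (Fin n)) :
    entH r = -(1 / (n : ℝ)) * ∑ x : Fin n, Lg r x := by
  unfold entH Lg
  congr 1
  refine Finset.sum_congr rfl fun x _ => ?_
  congr 2
  norm_cast
  simp [Nat.card_eq_fintype_card, Fintype.card_subtype, blk]

/-- The elementwise ratio `|A∩B|·|B∩C| / (|A∩B∩C|·|B|)` at `x`. -/
noncomputable def gg {n : ℕ} (a b c : Setoid (Fin n)) (x : Fin n) : ℝ :=
  (((blk (a ⊓ b) x).card : ℝ) * ((blk (b ⊓ c) x).card : ℝ)) /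
    (((blk (a ⊓ b ⊓ c) x).card : ℝ) * ((blk b x).card : ℝ))

lemma gg_pos {n : ℕ} (a b c : Setoid (Fin n)) (x : Fin n) : 0 < gg a b c x :=
  div_pos (mul_pos (blk_card_pos' _ x) (blk_card_pos' _ x))
    (mul_pos (blk_card_pos' _ x) (blk_card_pos' _ x))

lemma sum_ite_blk {n : ℕ} (u : Setoid (Fin n)) (x : Fin n) (d : ℝ) :
    ∑ z : Fin n, (if u.r x z then d else 0) = ((blk u x).card : ℝ) * d := by
  rw [Finset.sum_ite, Finset.sum_const_zero, add_zero, Finset.sum_const, nsmul_eq_mul]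
  have h : Finset.univ.filter (fun z => u.r x z) = blk u x := by
    ext z; simp [blk]
  rw [h]

/-- Core counting bound: `∑ₓ |A∩B|·|B∩C| / (|A∩B∩C|·|B|) ≤ n`. -/
lemma core {n : ℕ} (a b c : Setoid (Fin n)) :
    ∑ x : Fin n, gg a b c x ≤ (n : ℝ) := by
  have hA : ∀ x : Fin n, gg a b c x =
      ∑ y : Fin n, ∑ z : Fin n,
        (if (a ⊓ b).r x y ∧ (b ⊓ c).r x z then
          ((((blk (a ⊓ b ⊓ c) x).card : ℝ) * ((blk b x).card : ℝ))⁻¹) else 0) := by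
    intro x
    have h1 : ∀ y : Fin n,
        (∑ z : Fin n, (if (a ⊓ b).r x y ∧ (b ⊓ c).r x z then
          ((((blk (a ⊓ b ⊓ c) x).card : ℝ) * ((blk b x).card : ℝ))⁻¹) else 0))
        = (if (a ⊓ b).r x y then
            ((blk (b ⊓ c) x).card : ℝ) * ((((blk (a ⊓ b ⊓ c) x).card : ℝ) * ((blk b x).card : ℝ))⁻¹) else 0) := by
      intro y
      by_cases h : (a ⊓ b).r x y
      · simp only [h, true_and, if_true]
        exact sum_ite_blk _ _ _
      · simp [h]
    rw [Finset.sum_congr rfl fun y _ => h1 y, sum_ite_blk]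
    unfold gg
    rw [div_eq_mul_inv]
    ring
  have hB : ∀ y z : Fin n,
      (∑ x : Fin n, (if (a ⊓ b).r x y ∧ (b ⊓ c).r x z then
        ((((blk (a ⊓ b ⊓ c) x).card : ℝ) * ((blk b x).card : ℝ))⁻¹) else 0))
      ≤ (if b.r y z then ((blk b y).card : ℝ)⁻¹ else 0) := by
    intro y z
    rw [Finset.sum_ite, Finset.sum_const_zero, add_zero]
    set S := Finset.univ.filter (fun x => (a ⊓ b).r x y ∧ (b ⊓ c).r x z) with hS
    rcases S.eq_empty_or_nonempty with h | ⟨x₀, hx₀⟩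
    · rw [h, Finset.sum_empty]
      positivity
    · have hx₀' : (a ⊓ b).r x₀ y ∧ (b ⊓ c).r x₀ z := by
        simpa [hS] using hx₀
      obtain ⟨hab0, hbc0⟩ := hx₀'
      have hbyz : b.r y z := b.trans (b.symm (inf_r.mp hab0).2) (inf_r.mp hbc0).1
      rw [if_pos hbyz]
      have key : ∀ x ∈ S, (a ⊓ b ⊓ c).r x x₀ := by
        intro x hx
        obtain ⟨hab, hbc⟩ : (a ⊓ b).r x y ∧ (b ⊓ c).r x z := by simpa [hS] using hx
        have hax : a.r x x₀ := a.trans (inf_r.mp hab).1 (a.symm (inf_r.mp hab0).1)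
        have hbx : b.r x x₀ := b.trans (inf_r.mp hab).2 (b.symm (inf_r.mp hab0).2)
        have hcx : c.r x x₀ := c.trans (inf_r.mp hbc).2 (c.symm (inf_r.mp hbc0).2)
        exact inf_r.mpr ⟨inf_r.mpr ⟨hax, hbx⟩, hcx⟩
      have hDx : ∀ x ∈ S, ((((blk (a ⊓ b ⊓ c) x).card : ℝ) * ((blk b x).card : ℝ))⁻¹)
          = ((((blk (a ⊓ b ⊓ c) x₀).card : ℝ) * ((blk b y).card : ℝ))⁻¹) := by
        intro x hx
        obtain ⟨hab, _⟩ : (a ⊓ b).r x y ∧ (b ⊓ c).r x z := by simpa [hS] using hx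
        rw [blk_congr (key x hx), blk_congr (inf_r.mp hab).2]
      rw [Finset.sum_congr rfl hDx, Finset.sum_const, nsmul_eq_mul]
      have hsub : S ⊆ blk (a ⊓ b ⊓ c) x₀ := fun x hx =>
        mem_blk.mpr ((a ⊓ b ⊓ c).symm (key x hx))
      have hcard : (S.card : ℝ) ≤ ((blk (a ⊓ b ⊓ c) x₀).card : ℝ) := by
        exact_mod_cast Finset.card_le_card hsub
      have hM : (0:ℝ) < ((blk (a ⊓ b ⊓ c) x₀).card : ℝ) := blk_card_pos' _ _
      have hN : (0:ℝ) < ((blk b y).card : ℝ) := blk_card_pos' _ _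
      calc (S.card : ℝ) * ((((blk (a ⊓ b ⊓ c) x₀).card : ℝ) * ((blk b y).card : ℝ))⁻¹)
          ≤ ((blk (a ⊓ b ⊓ c) x₀).card : ℝ) * ((((blk (a ⊓ b ⊓ c) x₀).card : ℝ) * ((blk b y).card : ℝ))⁻¹) := by
            gcongr
        _ = ((blk b y).card : ℝ)⁻¹ := by
            rw [mul_inv, ← mul_assoc, mul_inv_cancel₀ hM.ne', one_mul]
  calc ∑ x : Fin n, gg a b c x
      = ∑ x : Fin n, ∑ y : Fin n, ∑ z : Fin n,
          (if (a ⊓ b).r x y ∧ (b ⊓ c).r x z then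
            ((((blk (a ⊓ b ⊓ c) x).card : ℝ) * ((blk b x).card : ℝ))⁻¹) else 0) :=
        Finset.sum_congr rfl fun x _ => hA x
    _ = ∑ y : Fin n, ∑ z : Fin n, ∑ x : Fin n,
          (if (a ⊓ b).r x y ∧ (b ⊓ c).r x z then
            ((((blk (a ⊓ b ⊓ c) x).card : ℝ) * ((blk b x).card : ℝ))⁻¹) else 0) := by
        rw [Finset.sum_comm]
        exact Finset.sum_congr rfl fun y _ => Finset.sum_comm
    _ ≤ ∑ y : Fin n, ∑ z : Fin n, (if b.r y z then ((blk b y).card : ℝ)⁻¹ else 0) :=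
        Finset.sum_le_sum fun y _ => Finset.sum_le_sum fun z _ => hB y z
    _ = ∑ y : Fin n, (1 : ℝ) := by
        refine Finset.sum_congr rfl fun y _ => ?_
        rw [sum_ite_blk, mul_inv_cancel₀ (blk_card_pos' b y).ne']
    _ = (n : ℝ) := by simp
  
lemma Lg_pt {n : ℕ} (hn : 0 < n) (a b c : Setoid (Fin n)) (x : Fin n) :
    Lg (a ⊓ b) x + Lg (b ⊓ c) x - Lg (a ⊓ b ⊓ c) x - Lg b x
      = Real.log (gg a b c x) / Real.log 2 := by
  have hn0 : ((n : ℝ)) ≠ 0 := by positivity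
  have hp : ((blk (a ⊓ b) x).card : ℝ) ≠ 0 := (blk_card_pos' _ _).ne'
  have hq : ((blk (b ⊓ c) x).card : ℝ) ≠ 0 := (blk_card_pos' _ _).ne'
  have hr : ((blk (a ⊓ b ⊓ c) x).card : ℝ) ≠ 0 := (blk_card_pos' _ _).ne'
  have hs : ((blk b x).card : ℝ) ≠ 0 := (blk_card_pos' _ _).ne'
  unfold Lg gg Real.logb
  rw [Real.log_div hp hn0, Real.log_div hq hn0, Real.log_div hr hn0, Real.log_div hs hn0,
    Real.log_div (mul_ne_zero hp hq) (mul_ne_zero hr hs), Real.log_mul hp hq,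
    Real.log_mul hr hs]
  ring

lemma lemC {n : ℕ} (hn : 0 < n) (a b c : Setoid (Fin n)) :
    entH (a ⊓ c) + entH b ≤ entH (a ⊓ b) + entH (b ⊓ c) := by
  have hn' : (0:ℝ) < (n : ℝ) := by exact_mod_cast hn
  -- monotonicity: finer partitions have larger `∑ Lg` is false ; rather Lg is monotone in block size
  have h1 : ∑ x : Fin n, Lg (a ⊓ b ⊓ c) x ≤ ∑ x : Fin n, Lg (a ⊓ c) x := by
    refine Finset.sum_le_sum fun x _ => ?_
    unfold Lg
    have hsub : blk (a ⊓ b ⊓ c) x ⊆ blk (a ⊓ c) x := by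
      intro y hy
      have h := mem_blk.mp hy
      exact mem_blk.mpr (inf_r.mpr ⟨(inf_r.mp (inf_r.mp h).1).1, (inf_r.mp h).2⟩)
    have hle : ((blk (a ⊓ b ⊓ c) x).card : ℝ) ≤ ((blk (a ⊓ c) x).card : ℝ) := by
      exact_mod_cast Finset.card_le_card hsub
    have hpos : (0:ℝ) < ((blk (a ⊓ b ⊓ c) x).card : ℝ) / n :=
      div_pos (blk_card_pos' _ _) hn'
    exact Real.logb_le_logb_of_le one_lt_two hpos (by gcongr)
  have hlog2 : (0:ℝ) < Real.log 2 := Real.log_pos one_lt_two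
  have h2 : ∑ x : Fin n, (Lg (a ⊓ b) x + Lg (b ⊓ c) x)
      ≤ ∑ x : Fin n, (Lg (a ⊓ b ⊓ c) x + Lg b x) := by
    have e : ∑ x : Fin n, (Lg (a ⊓ b) x + Lg (b ⊓ c) x)
        - ∑ x : Fin n, (Lg (a ⊓ b ⊓ c) x + Lg b x)
        = (∑ x : Fin n, Real.log (gg a b c x)) / Real.log 2 := by
      rw [← Finset.sum_sub_distrib, Finset.sum_div]
      refine Finset.sum_congr rfl fun x _ => ?_
      have := Lg_pt hn a b c x
      linarith
    have hsum : ∑ x : Fin n, Real.log (gg a b c x) ≤ 0 := by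
      have hle : ∑ x : Fin n, Real.log (gg a b c x)
          ≤ ∑ x : Fin n, (gg a b c x - 1) :=
        Finset.sum_le_sum fun x _ => Real.log_le_sub_one_of_pos (gg_pos a b c x)
      have heq : ∑ x : Fin n, (gg a b c x - 1) = (∑ x : Fin n, gg a b c x) - n := by
        rw [Finset.sum_sub_distrib]
        simp
      have := core a b c
      linarith
    have : ∑ x : Fin n, (Lg (a ⊓ b) x + Lg (b ⊓ c) x)
        - ∑ x : Fin n, (Lg (a ⊓ b ⊓ c) x + Lg b x) ≤ 0 := by
      rw [e]
      exact div_nonpos_of_nonpos_of_nonneg hsum hlog2.le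
    linarith
  rw [Finset.sum_add_distrib, Finset.sum_add_distrib] at h2
  have key : ∑ x : Fin n, Lg (a ⊓ b) x + ∑ x : Fin n, Lg (b ⊓ c) x
      ≤ ∑ x : Fin n, Lg (a ⊓ c) x + ∑ x : Fin n, Lg b x := by linarith
  rw [entH_eq, entH_eq, entH_eq, entH_eq]
  have h1n : (0:ℝ) < 1 / (n:ℝ) := by positivity
  nlinarith [mul_le_mul_of_nonneg_left key h1n.le]

/-- The Variation of Information satisfies the triangle inequality on the space of
partitions of an `n`-element set. -/
theorem VIent_triangle {n : ℕ} (hn : 0 < n) (θ θ' θ'' : Setoid (Fin n)) :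
    VIent θ θ'' ≤ VIent θ θ' + VIent θ' θ'' := by
  have := lemC hn θ θ' θ''
  unfold VIent
  linarith
end

section
/- Let $s_1, \dots, s_N, s$ be exchangeable real random variables whose joint distribution is almost surely tie-free (all $N+1$ values distinct). Define $\hat p = (|\{i : s \ge s_i\}| + 1)/(N+1)$. Then $\hat p$ is uniformly distributed on $\{1/(N+1), 2/(N+1), \dots, 1\}$. -/
open MeasureTheory

noncomputable def rnk (N : ℕ) (v : Fin (N + 1) → ℝ) (k : Fin (N + 1)) : ℕ :=
  Nat.card {l : Fin (N + 1) | v l ≤ v k}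

lemma rnk_eq_card_filter (N : ℕ) (v : Fin (N + 1) → ℝ) (k : Fin (N + 1)) :
    rnk N v k = (Finset.univ.filter (fun l => v l ≤ v k)).card := by
  classical
  simp [rnk, Nat.card_coe_set_eq, Set.ncard_eq_toFinset_card', Set.toFinset_setOf, Fintype.card_subtype]

lemma rnk_eq_sum (N : ℕ) (v : Fin (N + 1) → ℝ) (k : Fin (N + 1)) :
    rnk N v k = ∑ l : Fin (N + 1), if v l ≤ v k then 1 else 0 := by
  classical
  rw [rnk_eq_card_filter, Finset.card_filter]

lemma measurable_rnk (N : ℕ) (k : Fin (N + 1)) :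
    Measurable (fun v : Fin (N + 1) → ℝ => rnk N v k) := by
  classical
  have h : (fun v : Fin (N + 1) → ℝ => rnk N v k)
      = fun v => ∑ l : Fin (N + 1), if v l ≤ v k then 1 else 0 :=
    funext fun v => rnk_eq_sum N v k
  rw [h]
  exact Finset.measurable_sum _ fun l _ =>
    Measurable.ite (measurableSet_le (measurable_pi_apply l) (measurable_pi_apply k))
      measurable_const measurable_const

lemma measurableSet_inj (N : ℕ) :
    MeasurableSet {v : Fin (N + 1) → ℝ | Function.Injective v} := by
  have h : {v : Fin (N + 1) → ℝ | Function.Injective v}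
      = ⋂ (a) (b) (_ : a ≠ b), {v : Fin (N + 1) → ℝ | v a = v b}ᶜ := by
    ext v
    simp only [Set.mem_setOf_eq, Set.mem_iInter, Set.mem_compl_iff]
    constructor
    · intro hv a b hab hv2; exact hab (hv hv2)
    · intro hv a b hab
      by_contra h'
      exact hv a b h' hab
  rw [h]
  exact MeasurableSet.iInter fun a => MeasurableSet.iInter fun b => MeasurableSet.iInter
    fun _ => (measurableSet_eq_fun (measurable_pi_apply a) (measurable_pi_apply b)).compl

lemma rnk_lt_rnk (N : ℕ) {v : Fin (N + 1) → ℝ} {a b : Fin (N + 1)} (h : v a < v b) :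
    rnk N v a < rnk N v b := by
  classical
  rw [rnk_eq_card_filter, rnk_eq_card_filter]
  apply Finset.card_lt_card
  rw [Finset.ssubset_iff_of_subset]
  · exact ⟨b, by simp, by simp [not_le.mpr h]⟩
  · intro l hl
    simp only [Finset.mem_filter, Finset.mem_univ, true_and] at hl ⊢
    exact hl.trans h.le

lemma rnk_injective (N : ℕ) {v : Fin (N + 1) → ℝ} (hv : Function.Injective v) :
    Function.Injective (rnk N v) := by
  intro a b hab
  by_contra hne
  rcases lt_or_gt_of_ne (fun h => hne (hv h)) with h | h
  · exact absurd hab (rnk_lt_rnk N h).ne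
  · exact absurd hab.symm (rnk_lt_rnk N h).ne

lemma one_le_rnk (N : ℕ) (v : Fin (N + 1) → ℝ) (k : Fin (N + 1)) : 1 ≤ rnk N v k := by
  classical
  rw [rnk_eq_card_filter]
  exact Finset.card_pos.mpr ⟨k, by simp⟩

lemma rnk_le (N : ℕ) (v : Fin (N + 1) → ℝ) (k : Fin (N + 1)) : rnk N v k ≤ N + 1 := by
  classical
  rw [rnk_eq_card_filter]
  calc (Finset.univ.filter (fun l => v l ≤ v k)).card
      ≤ (Finset.univ : Finset (Fin (N + 1))).card := Finset.card_filter_le _ _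
    _ = N + 1 := by simp

lemma exists_rnk_eq (N : ℕ) {v : Fin (N + 1) → ℝ} (hv : Function.Injective v)
    (j : Fin (N + 1)) : ∃ k, rnk N v k = (j : ℕ) + 1 := by
  have h1 := one_le_rnk N v
  have h2 := rnk_le N v
  let f : Fin (N + 1) → Fin (N + 1) := fun k => ⟨rnk N v k - 1, by
    have := h1 k; have := h2 k; omega⟩
  have hf : Function.Injective f := by
    intro a b hab
    apply rnk_injective N hv
    have := h1 a; have := h1 b
    have : rnk N v a - 1 = rnk N v b - 1 := congrArg Fin.val hab
    omega
  obtain ⟨k, hk⟩ := Finite.injective_iff_surjective.mp hf j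
  refine ⟨k, ?_⟩
  have : rnk N v k - 1 = (j : ℕ) := congrArg Fin.val hk
  have := h1 k
  omega

lemma rnk_comp (N : ℕ) (v : Fin (N + 1) → ℝ) (σ : Equiv.Perm (Fin (N + 1))) (k : Fin (N + 1)) :
    rnk N (v ∘ σ) k = rnk N v (σ k) :=
  Nat.card_congr (σ.subtypeEquiv fun l => Iff.rfl)

lemma rnk_last (N : ℕ) (v : Fin (N + 1) → ℝ) :
    rnk N v (Fin.last N)
      = Nat.card {i : Fin N | v i.castSucc ≤ v (Fin.last N)} + 1 := by
  classical
  have hc : Nat.card {i : Fin N | v i.castSucc ≤ v (Fin.last N)}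
      = ∑ i : Fin N, if v i.castSucc ≤ v (Fin.last N) then 1 else 0 := by
    rw [Nat.card_coe_set_eq, Set.ncard_eq_toFinset_card', Set.toFinset_setOf,
      Finset.card_filter]
  rw [rnk_eq_sum, Fin.sum_univ_castSucc, hc, if_pos le_rfl]

/-- Exact distribution of the conformal p-value under exchangeability without ties:
if `(s₁, …, s_N, s)` (coordinates of `X`, with `s = X (Fin.last N)`) are exchangeable
and almost surely all distinct, then
`p̂ = (|{i : s ≥ sᵢ}| + 1)/(N+1)` is uniform on `{1/(N+1), …, (N+1)/(N+1)}`: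
each value `(j+1)/(N+1)` has probability exactly `1/(N+1)`. -/
theorem conformal_pvalue_uniform {Ω : Type*} [MeasurableSpace Ω]
    (P : Measure Ω) [IsProbabilityMeasure P] (N : ℕ)
    (X : Ω → Fin (N + 1) → ℝ) (hX : Measurable X)
    (hexch : ∀ σ : Equiv.Perm (Fin (N + 1)),
      Measure.map (fun ω => X ω ∘ σ) P = Measure.map X P)
    (hties : P {ω | Function.Injective (X ω)} = 1)
    (j : Fin (N + 1)) :
    P {ω | ((Nat.card {i : Fin N | X ω i.castSucc ≤ X ω (Fin.last N)} : ℝ) + 1) / (N + 1)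
        = ((j : ℝ) + 1) / (N + 1)}
      = ENNReal.ofReal (1 / (N + 1)) := by
  classical
  set μ := P.map X with hμdef
  -- the events
  set E : Fin (N + 1) → Set (Fin (N + 1) → ℝ) := fun k =>
    {v | Function.Injective v ∧ rnk N v k = (j : ℕ) + 1} with hEdef
  have hEmeas : ∀ k, MeasurableSet (E k) := fun k =>
    (measurableSet_inj N).inter ((measurable_rnk N k) (measurableSet_singleton ((j : ℕ) + 1)))
  have hEdisj : Pairwise (Function.onFun Disjoint E) := by
    intro a b hab
    apply Set.disjoint_left.mpr
    rintro v ⟨hv1, hv2⟩ ⟨hv3, hv4⟩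
    exact hab (rnk_injective N hv1 (hv2.trans hv4.symm))
  have hEunion : (⋃ k, E k) = {v : Fin (N + 1) → ℝ | Function.Injective v} := by
    ext v
    simp only [Set.mem_iUnion, hEdef, Set.mem_setOf_eq]
    constructor
    · rintro ⟨k, hk, _⟩; exact hk
    · intro hv
      obtain ⟨k, hk⟩ := exists_rnk_eq N hv j
      exact ⟨k, hv, hk⟩
  -- all events have the same measure
  have hEeq : ∀ k, μ (E k) = μ (E (Fin.last N)) := by
    intro k
    set σ : Equiv.Perm (Fin (N + 1)) := Equiv.swap (Fin.last N) k with hσ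
    have hσlast : σ (Fin.last N) = k := Equiv.swap_apply_left _ _
    have hcomp : Measurable (fun ω => X ω ∘ σ) :=
      measurable_pi_iff.mpr fun i => (measurable_pi_apply (σ i)).comp hX
    have hpre : (fun ω => X ω ∘ σ) ⁻¹' E (Fin.last N) = X ⁻¹' E k := by
      ext ω
      simp only [Set.mem_preimage, hEdef, Set.mem_setOf_eq]
      rw [rnk_comp, hσlast, σ.injective_comp]
    calc μ (E k) = P (X ⁻¹' E k) := Measure.map_apply hX (hEmeas k)
      _ = P ((fun ω => X ω ∘ σ) ⁻¹' E (Fin.last N)) := by rw [hpre]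
      _ = (P.map (fun ω => X ω ∘ σ)) (E (Fin.last N)) :=
          (Measure.map_apply hcomp (hEmeas _)).symm
      _ = μ (E (Fin.last N)) := by rw [hexch σ]
  -- total mass one on the injective set
  have hinj1 : μ {v : Fin (N + 1) → ℝ | Function.Injective v} = 1 := by
    rw [hμdef, Measure.map_apply hX (measurableSet_inj N)]
    exact hties
  have hsum : (↑(N + 1) : ENNReal) * μ (E (Fin.last N)) = 1 := by
    have h1 : μ (⋃ k, E k) = ∑' k, μ (E k) := measure_iUnion hEdisj hEmeas
    rw [hEunion, hinj1] at h1
    have h2 : ∑' k, μ (E k) = ∑ k : Fin (N + 1), μ (E k) := tsum_fintype _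
    rw [h2] at h1
    have h3 : ∑ k : Fin (N + 1), μ (E k) = (N + 1) • μ (E (Fin.last N)) := by
      rw [Finset.sum_congr rfl fun k _ => hEeq k, Finset.sum_const, Finset.card_univ,
        Fintype.card_fin]
    rw [h3, nsmul_eq_mul] at h1
    exact_mod_cast h1.symm
  have hElast : μ (E (Fin.last N)) = (↑(N + 1) : ENNReal)⁻¹ := by
    have ha : (↑(N + 1) : ENNReal) ≠ 0 := by simp
    have ha' : (↑(N + 1) : ENNReal) ≠ ⊤ := by simp
    calc μ (E (Fin.last N))
        = (↑(N + 1) : ENNReal)⁻¹ * ((↑(N + 1) : ENNReal) * μ (E (Fin.last N))) := by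
          rw [← mul_assoc, ENNReal.inv_mul_cancel ha ha', one_mul]
      _ = (↑(N + 1) : ENNReal)⁻¹ := by rw [hsum, mul_one]
  -- almost-everywhere injectivity
  have hae : ∀ᵐ ω ∂P, Function.Injective (X ω) := by
    rw [ae_iff]
    have hms : MeasurableSet {ω | Function.Injective (X ω)} := hX (measurableSet_inj N)
    have : P {ω | Function.Injective (X ω)}ᶜ = 0 := by
      rw [measure_compl hms (measure_ne_top P _), hties, measure_univ, tsub_self]
    simpa [Set.compl_setOf] using this
  -- the goal set agrees a.e. with the preimage of the last event
  have hNpos : (0 : ℝ) < (N : ℝ) + 1 := by positivity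
  have hGE : {ω | ((Nat.card {i : Fin N | X ω i.castSucc ≤ X ω (Fin.last N)} : ℝ) + 1) / (N + 1)
        = ((j : ℝ) + 1) / (N + 1)} =ᵐ[P] X ⁻¹' E (Fin.last N) := by
    filter_upwards [hae] with ω hinj
    have hr : rnk N (X ω) (Fin.last N)
        = Nat.card {i : Fin N | X ω i.castSucc ≤ X ω (Fin.last N)} + 1 := rnk_last N (X ω)
    have key : (((Nat.card {i : Fin N | X ω i.castSucc ≤ X ω (Fin.last N)} : ℝ) + 1) / (↑N + 1)
        = ((j : ℝ) + 1) / (↑N + 1))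
        ↔ (Function.Injective (X ω) ∧ rnk N (X ω) (Fin.last N) = (j : ℕ) + 1) := by
      constructor
      · intro h
        refine ⟨hinj, ?_⟩
        rw [div_eq_div_iff hNpos.ne' hNpos.ne'] at h
        have h2 := mul_right_cancel₀ (ne_of_gt hNpos) h
        have h3 : (Nat.card {i : Fin N | X ω i.castSucc ≤ X ω (Fin.last N)} : ℝ)
            = ((j : ℕ) : ℝ) := by push_cast at h2 ⊢; linarith
        have h4 : Nat.card {i : Fin N | X ω i.castSucc ≤ X ω (Fin.last N)} = (j : ℕ) :=
          Nat.cast_injective h3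
        rw [hr, h4]
      · rintro ⟨-, h⟩
        rw [hr] at h
        have h4 : Nat.card {i : Fin N | X ω i.castSucc ≤ X ω (Fin.last N)} = (j : ℕ) := by omega
        rw [h4]
    exact eq_iff_iff.mpr key
  rw [measure_congr hGE, ← Measure.map_apply hX (hEmeas (Fin.last N)), ← hμdef, hElast]
  rw [one_div, ENNReal.ofReal_inv_of_pos hNpos]
  congr 1
  rw [show ((N : ℝ) + 1) = ((N + 1 : ℕ) : ℝ) by push_cast; ring, ENNReal.ofReal_natCast]
end

section
/- Let $\theta_1, \dots, \theta_N, \theta$ be i.i.d. from $\Pi$ on $\Theta$, let $A \subseteq \Theta$ be measurable with $\Pi(A) > 0$, and let $s : \Theta \to \mathbb{R}$ be measurable. Conditional on the event $\{\theta \in A\} \cap \{\text{at least one } \theta_i \in A\}$, let $m$ be the (random) number of calibration points in $A$ and define $\hat p_A(\theta) = (|\{i : \theta_i \in A,\ s(\theta) \ge s(\theta_i)\}| + 1)/(m+1)$ and $\mathcal{C}^A_{1-\alpha} = \{\vartheta \in A : \hat p_A(\vartheta) \ge \alpha\}$. Then $\mathbb{P}[\theta \in \mathcal{C}^A_{1-\alpha}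 \mid \theta \in A] \ge 1 - \alpha$. -/
open MeasureTheory ProbabilityTheory Finset
open scoped ENNReal

section Aux

lemma aux_count {ι : Type*} [DecidableEq ι] (T : Finset ι) (f : ι → ℝ) {a : ℝ}
    (ha0 : 0 < a) (_ha1 : a < 1) :
    (1 - a) * T.card ≤
      ((T.filter fun j => a * T.card ≤ ((T.filter fun i => f i ≤ f j).card : ℝ)).card : ℝ) := by
  classical
  rcases T.eq_empty_or_nonempty with rfl | hT
  · simp
  have hc : 0 < (T.card : ℝ) := by exact_mod_cast Finset.card_pos.mpr hT
  set k : ℕ := ⌈a * T.card⌉₊ with hk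
  have hkpos : 0 < k := Nat.ceil_pos.mpr (by positivity)
  have hcond : ∀ j, (a * T.card ≤ ((T.filter fun i => f i ≤ f j).card : ℝ)) ↔
      k ≤ (T.filter fun i => f i ≤ f j).card := by
    intro j; rw [hk, Nat.ceil_le]
  set S : Finset ι := T.filter fun j => (T.filter fun i => f i ≤ f j).card < k with hS
  have hScard : S.card < k := by
    rcases S.eq_empty_or_nonempty with h | h
    · simpa [h] using hkpos
    · obtain ⟨j₀, hj₀S, hmax⟩ := S.exists_max_image f h
      have hsub : S ⊆ T.filter fun i => f i ≤ f j₀ := fun j hj =>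
        mem_filter.2 ⟨(mem_filter.1 hj).1, hmax j hj⟩
      calc S.card ≤ (T.filter fun i => f i ≤ f j₀).card := card_le_card hsub
        _ < k := (mem_filter.1 hj₀S).2
  have hfilt : (T.filter fun j => a * T.card ≤ ((T.filter fun i => f i ≤ f j).card : ℝ))
      = T.filter fun j => k ≤ (T.filter fun i => f i ≤ f j).card := by
    apply filter_congr; intro j _; simp [hcond j]
  have hsplit : (T.filter fun j => k ≤ (T.filter fun i => f i ≤ f j).card).card + S.card
      = T.card := by
    rw [hS]
    have := T.card_filter_add_card_filter_not
      (p := fun j => k ≤ (T.filter fun i => f i ≤ f j).card)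
    simpa [not_le] using this
  have hck : (k : ℝ) < a * T.card + 1 := by
    rw [hk]; exact Nat.ceil_lt_add_one (by positivity)
  have hSr : (S.card : ℝ) < a * T.card := by
    have h1 : (S.card : ℝ) + 1 ≤ k := by exact_mod_cast hScard
    linarith
  rw [hfilt]
  have hcast : ((T.filter fun j => k ≤ (T.filter fun i => f i ≤ f j).card).card : ℝ) + S.card
      = T.card := by exact_mod_cast congrArg (Nat.cast : ℕ → ℝ) hsplit
  nlinarith

lemma aux_natcard {n : ℕ} (p : Fin n → Prop) [DecidablePred p] :
    Nat.card {i : Fin n | p i} = (Finset.univ.filter p).card := by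
  simp [Nat.card_eq_fintype_card, Fintype.card_subtype]

lemma aux_meas_count {X : Type*} [MeasurableSpace X] {n : ℕ} (p : Fin n → X → Prop)
    [∀ i x, Decidable (p i x)] (hp : ∀ i, MeasurableSet {x | p i x}) :
    Measurable fun x => ((Finset.univ.filter fun i => p i x).card : ℝ) := by
  have h : (fun x => ((Finset.univ.filter fun i => p i x).card : ℝ))
      = fun x => ∑ i, if p i x then (1 : ℝ) else 0 := by
    funext x
    rw [Finset.card_filter]
    push_cast
    rfl
  rw [h]
  exact Finset.measurable_sum _ fun i _ => Measurable.ite (hp i) measurable_const measurable_const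

lemma aux_coord {Θ : Type*} [MeasurableSpace Θ] (Pr : Measure Θ) [IsProbabilityMeasure Pr]
    {n : ℕ} (A : Set Θ) (j : Fin n) :
    Measure.pi (fun _ : Fin n => Pr) {x | x j ∈ A} = Pr A := by
  classical
  have h : {x : Fin n → Θ | x j ∈ A}
      = Set.pi Set.univ (Function.update (fun _ => (Set.univ : Set Θ)) j A) := by
    rw [← Set.eval_preimage]; rfl
  rw [h, Measure.pi_pi]
  rw [Finset.prod_eq_single j]
  · simp
  · intro i _ hij; simp [Function.update_of_ne hij]
  · simp

lemma aux_card_swap {n : ℕ} (f : Equiv.Perm (Fin n)) (j l : Fin n) (hfl : f j = l)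
    (q : Fin n → Prop) [DecidablePred q] :
    (Finset.univ.filter fun i => i ≠ l ∧ q (f.symm i)).card
      = (Finset.univ.filter fun i => i ≠ j ∧ q i).card := by
  apply Finset.card_nbij' (fun i => f.symm i) (fun i => f i)
  · intro i hi
    rw [mem_coe, mem_filter] at hi ⊢
    refine ⟨mem_univ _, ?_, hi.2.2⟩
    intro hcon
    exact hi.2.1 (by rw [← hfl, ← hcon, Equiv.apply_symm_apply])
  · intro i hi
    rw [mem_coe, mem_filter] at hi ⊢
    refine ⟨mem_univ _, ?_, by rw [Equiv.symm_apply_apply]; exact hi.2.2⟩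
    intro hcon
    exact hi.2.1 (by rw [← hcon] at hfl; exact (f.injective hfl).symm ▸ rfl)
  · intro i _; exact Equiv.apply_symm_apply f i
  · intro i _; exact Equiv.symm_apply_apply f i

lemma aux_card_castSucc {n : ℕ} (q : Fin (n + 1) → Prop) [DecidablePred q] :
    (Finset.univ.filter fun i : Fin n => q i.castSucc).card
      = (Finset.univ.filter fun i : Fin (n + 1) => i ≠ Fin.last n ∧ q i).card := by
  refine Finset.card_bij (fun i _ => Fin.castSucc i) ?_ ?_ ?_
  · intro i hi
    rw [mem_filter] at hi ⊢
    exact ⟨mem_univ _, Fin.ne_of_lt (Fin.castSucc_lt_last i), hi.2⟩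
  · intro a _ b _ h
    exact Fin.castSucc_injective _ h
  · intro b hb
    rw [mem_filter] at hb
    refine ⟨b.castPred hb.2.1, ?_, Fin.castSucc_castPred b hb.2.1⟩
    rw [mem_filter]
    refine ⟨mem_univ _, ?_⟩
    have := hb.2.2
    rwa [← Fin.castSucc_castPred b hb.2.1] at this


/-- Conditional (restricted) conformal inference: with `θ₁, …, θ_N, θ` i.i.d. from
`Pr` (encoded as the product measure on `(Fin N → Θ) × Θ`), a measurable set `A`
of positive mass, `m` the number of calibration points in `A`, and
`p̂_A(θ) = (|{i : θᵢ ∈ A, s(θ) ≥ s(θᵢ)}| + 1)/(m + 1)`, conditionally on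
`θ ∈ A` the new draw lies in `C^A_{1-α} = {ϑ ∈ A : p̂_A(ϑ) ≥ α}` with probability
at least `1 - α`. -/
theorem conditional_conformal_coverage {Θ : Type*} [MeasurableSpace Θ]
    (Pr : Measure Θ) [IsProbabilityMeasure Pr]
    (N : ℕ) (hN : 1 ≤ N) (A : Set Θ) (hA : MeasurableSet A) (hApos : 0 < Pr A)
    (s : Θ → ℝ) (hs : Measurable s) (α : ℝ) (hα : α ∈ Set.Ioo (0 : ℝ) 1) :
    ENNReal.ofReal (1 - α) ≤
      ((Measure.pi fun _ : Fin N => Pr).prod Pr)[|{p : (Fin N → Θ) × Θ | p.2 ∈ A}]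
        {p : (Fin N → Θ) × Θ | p.2 ∈ A ∧
          α ≤ ((Nat.card {i : Fin N | p.1 i ∈ A ∧ s (p.1 i) ≤ s p.2} : ℝ) + 1)
              / ((Nat.card {i : Fin N | p.1 i ∈ A} : ℝ) + 1)} := by
  classical
  obtain ⟨hα0, hα1⟩ := hα
  set μ : Measure ((Fin N → Θ) × Θ) := (Measure.pi fun _ : Fin N => Pr).prod Pr with hμ
  set ν : Measure (Fin (N + 1) → Θ) := Measure.pi (fun _ : Fin (N + 1) => Pr) with hν
  set E : Set ((Fin N → Θ) × Θ) := {p | p.2 ∈ A ∧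
      α ≤ (((Finset.univ.filter fun i => p.1 i ∈ A ∧ s (p.1 i) ≤ s p.2).card : ℝ) + 1)
          / (((Finset.univ.filter fun i => p.1 i ∈ A).card : ℝ) + 1)} with hE
  -- the statement's event equals E
  have hEeq : {p : (Fin N → Θ) × Θ | p.2 ∈ A ∧
      α ≤ ((Nat.card {i : Fin N | p.1 i ∈ A ∧ s (p.1 i) ≤ s p.2} : ℝ) + 1)
          / ((Nat.card {i : Fin N | p.1 i ∈ A} : ℝ) + 1)} = E := by
    ext p
    rw [hE]
    simp only [Set.mem_setOf_eq]
    rw [aux_natcard (fun i => p.1 i ∈ A ∧ s (p.1 i) ≤ s p.2), aux_natcard (fun i => p.1 i ∈ A)]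
  set G : Fin (N + 1) → Set (Fin (N + 1) → Θ) := fun j =>
    {x | x j ∈ A ∧
      α ≤ (((Finset.univ.filter fun i => i ≠ j ∧ x i ∈ A ∧ s (x i) ≤ s (x j)).card : ℝ) + 1)
          / (((Finset.univ.filter fun i => i ≠ j ∧ x i ∈ A).card : ℝ) + 1)} with hG
  have hGmeas : ∀ j, MeasurableSet (G j) := by
    intro j
    have h1 : MeasurableSet {x : Fin (N + 1) → Θ | x j ∈ A} := measurable_pi_apply j hA
    have hps : ∀ (i : Fin (N + 1)),
        MeasurableSet {x : Fin (N + 1) → Θ | i ≠ j ∧ x i ∈ A ∧ s (x i) ≤ s (x j)} := by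
      intro i
      by_cases hij : i = j
      · simp [hij]
      · have heq : {x : Fin (N + 1) → Θ | i ≠ j ∧ x i ∈ A ∧ s (x i) ≤ s (x j)}
            = {x | x i ∈ A} ∩ {x | s (x i) ≤ s (x j)} := by ext x; simp [hij]
        rw [heq]
        exact (measurable_pi_apply i hA).inter
          (measurableSet_le (hs.comp (measurable_pi_apply i)) (hs.comp (measurable_pi_apply j)))
    have hpd : ∀ (i : Fin (N + 1)), MeasurableSet {x : Fin (N + 1) → Θ | i ≠ j ∧ x i ∈ A} := by
      intro i
      by_cases hij : i = j
      · simp [hij]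
      · have heq : {x : Fin (N + 1) → Θ | i ≠ j ∧ x i ∈ A} = {x | x i ∈ A} := by
          ext x; simp [hij]
        rw [heq]
        exact measurable_pi_apply i hA
    have hnum := aux_meas_count _ hps
    have hden := aux_meas_count _ hpd
    have h2 : MeasurableSet {x : Fin (N + 1) → Θ |
        α ≤ (((Finset.univ.filter fun i => i ≠ j ∧ x i ∈ A ∧ s (x i) ≤ s (x j)).card : ℝ) + 1)
            / (((Finset.univ.filter fun i => i ≠ j ∧ x i ∈ A).card : ℝ) + 1)} :=
      measurableSet_le measurable_const
        ((hnum.add measurable_const).div (hden.add measurable_const))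
    exact h1.inter h2
  have hEmeas : MeasurableSet E := by
    have h1 : MeasurableSet {p : (Fin N → Θ) × Θ | p.2 ∈ A} := measurable_snd hA
    have hps : ∀ (i : Fin N),
        MeasurableSet {p : (Fin N → Θ) × Θ | p.1 i ∈ A ∧ s (p.1 i) ≤ s p.2} := by
      intro i
      exact (((measurable_pi_apply i).comp measurable_fst) hA).inter
        (measurableSet_le (hs.comp ((measurable_pi_apply i).comp measurable_fst))
          (hs.comp measurable_snd))
    have hpd : ∀ (i : Fin N), MeasurableSet {p : (Fin N → Θ) × Θ | p.1 i ∈ A} := fun i =>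
      ((measurable_pi_apply i).comp measurable_fst) hA
    have hnum := aux_meas_count _ hps
    have hden := aux_meas_count _ hpd
    have h2 : MeasurableSet {p : (Fin N → Θ) × Θ |
        α ≤ (((Finset.univ.filter fun i => p.1 i ∈ A ∧ s (p.1 i) ≤ s p.2).card : ℝ) + 1)
            / (((Finset.univ.filter fun i => p.1 i ∈ A).card : ℝ) + 1)} :=
      measurableSet_le measurable_const
        ((hnum.add measurable_const).div (hden.add measurable_const))
    exact h1.inter h2
  have hsymm : ∀ j, ν (G j) = ν (G (Fin.last N)) := by
    intro j
    set f : Equiv.Perm (Fin (N + 1)) := Equiv.swap j (Fin.last N) with hf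
    have hfjl : f j = Fin.last N := by rw [hf]; exact Equiv.swap_apply_left _ _
    have hmp : MeasurePreserving
        (MeasurableEquiv.piCongrLeft (fun _ : Fin (N + 1) => Θ) f) ν ν :=
      measurePreserving_piCongrLeft (fun _ => Pr) f
    have hφ : ∀ (x : Fin (N + 1) → Θ) (b : Fin (N + 1)),
        (MeasurableEquiv.piCongrLeft (fun _ : Fin (N + 1) => Θ) f) x b = x (f.symm b) := by
      intro x b
      have h := Equiv.piCongrLeft_apply_apply (fun _ : Fin (N + 1) => Θ) f x (f.symm b)
      rw [Equiv.apply_symm_apply] at h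
      simpa [MeasurableEquiv.coe_piCongrLeft] using h
    have hfl : f.symm (Fin.last N) = j := by
      rw [hf, Equiv.symm_swap]; exact Equiv.swap_apply_right _ _
    have hpre : (MeasurableEquiv.piCongrLeft (fun _ : Fin (N + 1) => Θ) f) ⁻¹'
        (G (Fin.last N)) = G j := by
      ext x
      simp only [Set.mem_preimage, hG, Set.mem_setOf_eq, hφ, hfl]
      have hcard1 : (Finset.univ.filter fun i =>
            i ≠ Fin.last N ∧ x (f.symm i) ∈ A ∧ s (x (f.symm i)) ≤ s (x j)).card
          = (Finset.univ.filter fun i => i ≠ j ∧ x i ∈ A ∧ s (x i) ≤ s (x j)).card :=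
        aux_card_swap f j (Fin.last N) hfjl (fun i => x i ∈ A ∧ s (x i) ≤ s (x j))
      have hcard2 : (Finset.univ.filter fun i => i ≠ Fin.last N ∧ x (f.symm i) ∈ A).card
          = (Finset.univ.filter fun i => i ≠ j ∧ x i ∈ A).card :=
        aux_card_swap f j (Fin.last N) hfjl (fun i => x i ∈ A)
      rw [hcard1, hcard2]
    rw [← hpre]
    exact hmp.measure_preimage (hGmeas (Fin.last N)).nullMeasurableSet
  have hpoint : ∀ x : Fin (N + 1) → Θ,
      (1 - α) * ((Finset.univ.filter fun j : Fin (N + 1) => x j ∈ A).card : ℝ)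
        ≤ ((Finset.univ.filter fun j : Fin (N + 1) => x ∈ G j).card : ℝ) := by
    intro x
    set T : Finset (Fin (N + 1)) := Finset.univ.filter fun j => x j ∈ A with hT
    have hmemT : ∀ j, j ∈ T ↔ x j ∈ A := by
      intro j; rw [hT, mem_filter]; simp
    have key : ∀ j, x j ∈ A →
        ((α ≤ (((Finset.univ.filter fun i => i ≠ j ∧ x i ∈ A ∧ s (x i) ≤ s (x j)).card : ℝ) + 1)
          / (((Finset.univ.filter fun i => i ≠ j ∧ x i ∈ A).card : ℝ) + 1)) ↔
        α * T.card ≤ ((T.filter fun i => s (x i) ≤ s (x j)).card : ℝ)) := by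
      intro j hj
      have hjT : j ∈ T := (hmemT j).2 hj
      have hden : (Finset.univ.filter fun i => i ≠ j ∧ x i ∈ A) = T.erase j := by
        ext i
        rw [mem_filter, Finset.mem_erase, hmemT i]
        simp only [mem_univ, true_and]
        try tauto
      have hnum : (Finset.univ.filter fun i => i ≠ j ∧ x i ∈ A ∧ s (x i) ≤ s (x j))
          = (T.filter fun i => s (x i) ≤ s (x j)).erase j := by
        ext i
        rw [mem_filter, Finset.mem_erase, mem_filter, hmemT i]
        simp only [mem_univ, true_and]
        try tauto
      have hjr : j ∈ T.filter fun i => s (x i) ≤ s (x j) := mem_filter.2 ⟨hjT, le_refl _⟩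
      have hc1 : 1 ≤ T.card := Finset.card_pos.2 ⟨j, hjT⟩
      have hr1 : 1 ≤ (T.filter fun i => s (x i) ≤ s (x j)).card := Finset.card_pos.2 ⟨j, hjr⟩
      rw [hden, hnum, card_erase_of_mem hjT, card_erase_of_mem hjr]
      have hd' : ((T.card - 1 : ℕ) : ℝ) + 1 = T.card := by rw [Nat.cast_sub hc1]; ring
      have hn' : (((T.filter fun i => s (x i) ≤ s (x j)).card - 1 : ℕ) : ℝ) + 1
          = (T.filter fun i => s (x i) ≤ s (x j)).card := by rw [Nat.cast_sub hr1]; ring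
      rw [hd', hn']
      have hcpos : (0 : ℝ) < T.card := by exact_mod_cast hc1
      rw [le_div_iff₀ hcpos]
    have hfeq : (Finset.univ.filter fun j : Fin (N + 1) => x ∈ G j)
        = T.filter fun j => α * T.card ≤ ((T.filter fun i => s (x i) ≤ s (x j)).card : ℝ) := by
      ext j
      rw [mem_filter, mem_filter, hmemT j]
      simp only [mem_univ, true_and, hG, Set.mem_setOf_eq]
      constructor
      · rintro ⟨hj, hcnd⟩; exact ⟨hj, (key j hj).1 hcnd⟩
      · rintro ⟨hj, hcnd⟩; exact ⟨hj, (key j hj).2 hcnd⟩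
    rw [hfeq]
    exact aux_count T (fun j => s (x j)) hα0 hα1
  have hcoordmeas : ∀ j : Fin (N + 1), MeasurableSet {x : Fin (N + 1) → Θ | x j ∈ A} :=
    fun j => measurable_pi_apply j hA
  have hlower : ENNReal.ofReal (1 - α) * Pr A ≤ ν (G (Fin.last N)) := by
    have hcardcast : ∀ (S : Fin (N + 1) → Set (Fin (N + 1) → Θ)) (x : Fin (N + 1) → Θ),
        (∑ j, Set.indicator (S j) (fun _ => (1 : ℝ≥0∞)) x)
          = ((Finset.univ.filter fun j => x ∈ S j).card : ℝ≥0∞) := by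
      intro S x
      rw [Finset.card_filter, Nat.cast_sum]
      refine Finset.sum_congr rfl fun j _ => ?_
      by_cases h : x ∈ S j <;> simp [Set.indicator_apply, h]
    have hptwise : ∀ x : Fin (N + 1) → Θ,
        ENNReal.ofReal (1 - α) *
          (∑ j, Set.indicator {y : Fin (N + 1) → Θ | y j ∈ A} (fun _ => (1 : ℝ≥0∞)) x)
        ≤ ∑ j, Set.indicator (G j) (fun _ => (1 : ℝ≥0∞)) x := by
      intro x
      rw [hcardcast, hcardcast]
      have h := hpoint x
      have hm : ((Finset.univ.filter fun j : Fin (N + 1) => x ∈ {y : Fin (N + 1) → Θ | y j ∈ A}).card)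
          = ((Finset.univ.filter fun j : Fin (N + 1) => x j ∈ A).card) := rfl
      rw [hm]
      have hgen : ∀ m n : ℕ, (1 - α) * (m : ℝ) ≤ (n : ℝ) →
          ENNReal.ofReal (1 - α) * (m : ℝ≥0∞) ≤ (n : ℝ≥0∞) := by
        intro m n hmn
        rw [← ENNReal.ofReal_natCast n, ← ENNReal.ofReal_natCast m,
          ← ENNReal.ofReal_mul (by linarith : (0:ℝ) ≤ 1 - α)]
        exact ENNReal.ofReal_le_ofReal hmn
      exact hgen _ _ (by convert h using 4)
    have hsumG : ∑ j, ν (G j) = ∫⁻ x, (∑ j, Set.indicator (G j) (fun _ => (1 : ℝ≥0∞)) x) ∂ν := by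
      rw [lintegral_finset_sum _ (fun j _ => measurable_const.indicator (hGmeas j))]
      refine Finset.sum_congr rfl fun j _ => ?_
      rw [lintegral_indicator_const (hGmeas j), one_mul]
    have hsumA : ∫⁻ x, (∑ j, Set.indicator {y : Fin (N + 1) → Θ | y j ∈ A}
        (fun _ => (1 : ℝ≥0∞)) x) ∂ν = (N + 1 : ℕ) * Pr A := by
      rw [lintegral_finset_sum _ (fun j _ => measurable_const.indicator (hcoordmeas j))]
      have : ∀ j : Fin (N + 1), ∫⁻ x, Set.indicator {y : Fin (N + 1) → Θ | y j ∈ A}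
          (fun _ => (1 : ℝ≥0∞)) x ∂ν = Pr A := by
        intro j
        rw [lintegral_indicator_const (hcoordmeas j), one_mul, hν, aux_coord]
      rw [Finset.sum_congr rfl fun j _ => this j, Finset.sum_const, Finset.card_univ,
        Fintype.card_fin, nsmul_eq_mul]
    have hconst : ∑ j, ν (G j) = (N + 1 : ℕ) * ν (G (Fin.last N)) := by
      rw [Finset.sum_congr rfl fun j _ => hsymm j, Finset.sum_const, Finset.card_univ,
        Fintype.card_fin, nsmul_eq_mul]
    have hchain : ENNReal.ofReal (1 - α) * ((N + 1 : ℕ) * Pr A)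
        ≤ (N + 1 : ℕ) * ν (G (Fin.last N)) := by
      calc ENNReal.ofReal (1 - α) * ((N + 1 : ℕ) * Pr A)
          = ENNReal.ofReal (1 - α) * ∫⁻ x, (∑ j, Set.indicator
            {y : Fin (N + 1) → Θ | y j ∈ A} (fun _ => (1 : ℝ≥0∞)) x) ∂ν := by rw [hsumA]
        _ = ∫⁻ x, ENNReal.ofReal (1 - α) * (∑ j, Set.indicator
            {y : Fin (N + 1) → Θ | y j ∈ A} (fun _ => (1 : ℝ≥0∞)) x) ∂ν :=
            (lintegral_const_mul' _ _ ENNReal.ofReal_ne_top).symm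
        _ ≤ ∫⁻ x, (∑ j, Set.indicator (G j) (fun _ => (1 : ℝ≥0∞)) x) ∂ν :=
            lintegral_mono hptwise
        _ = ∑ j, ν (G j) := hsumG.symm
        _ = (N + 1 : ℕ) * ν (G (Fin.last N)) := hconst
    have hne0 : ((N + 1 : ℕ) : ℝ≥0∞) ≠ 0 := by
      simp
    have hnetop : ((N + 1 : ℕ) : ℝ≥0∞) ≠ ⊤ := by
      simp
    rw [show ENNReal.ofReal (1 - α) * (((N + 1 : ℕ) : ℝ≥0∞) * Pr A)
        = ((N + 1 : ℕ) : ℝ≥0∞) * (ENNReal.ofReal (1 - α) * Pr A) by ring] at hchain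
    exact (ENNReal.mul_le_mul_iff_right hne0 hnetop).1 hchain
  have hEG : μ E = ν (G (Fin.last N)) := by
    have hψ := measurePreserving_piFinSuccAbove (fun _ : Fin (N + 1) => Pr) (Fin.last N)
    have hswap : MeasurePreserving Prod.swap
        (Pr.prod (Measure.pi fun _ : Fin N => Pr)) μ := by
      rw [hμ]
      exact Measure.measurePreserving_swap
    have hcomp := hswap.comp hψ
    have happ : ∀ x : Fin (N + 1) → Θ,
        (Prod.swap ∘ (MeasurableEquiv.piFinSuccAbove (fun _ : Fin (N + 1) => Θ) (Fin.last N))) x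
          = (fun i : Fin N => x i.castSucc, x (Fin.last N)) := by
      intro x
      have : (MeasurableEquiv.piFinSuccAbove (fun _ : Fin (N + 1) => Θ) (Fin.last N)) x
          = (x (Fin.last N), fun i => x ((Fin.last N).succAbove i)) := rfl
      rw [Function.comp_apply, this]
      simp [Fin.succAbove_last]
    have hpre : (Prod.swap ∘ (MeasurableEquiv.piFinSuccAbove
        (fun _ : Fin (N + 1) => Θ) (Fin.last N))) ⁻¹' E = G (Fin.last N) := by
      ext x
      rw [Set.mem_preimage, happ x]
      simp only [hE, hG, Set.mem_setOf_eq]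
      have hcard1 : (Finset.univ.filter fun i : Fin N =>
            x i.castSucc ∈ A ∧ s (x i.castSucc) ≤ s (x (Fin.last N))).card
          = (Finset.univ.filter fun i : Fin (N + 1) =>
            i ≠ Fin.last N ∧ x i ∈ A ∧ s (x i) ≤ s (x (Fin.last N))).card :=
        aux_card_castSucc (fun i => x i ∈ A ∧ s (x i) ≤ s (x (Fin.last N)))
      have hcard2 : (Finset.univ.filter fun i : Fin N => x i.castSucc ∈ A).card
          = (Finset.univ.filter fun i : Fin (N + 1) => i ≠ Fin.last N ∧ x i ∈ A).card :=
        aux_card_castSucc (fun i => x i ∈ A)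
      rw [hcard1, hcard2]
    rw [← hpre]
    exact (hcomp.measure_preimage hEmeas.nullMeasurableSet).symm
  -- final conditional-probability computation
  rw [hEeq]
  have hB : MeasurableSet {p : (Fin N → Θ) × Θ | p.2 ∈ A} := measurable_snd hA
  rw [cond_apply hB]
  have hBval : μ {p : (Fin N → Θ) × Θ | p.2 ∈ A} = Pr A := by
    have hBeq : {p : (Fin N → Θ) × Θ | p.2 ∈ A} = Set.univ ×ˢ A := by
      ext p; simp [Set.mem_prod]
    rw [hμ, hBeq, Measure.prod_prod, measure_univ, one_mul]
  have hBE : {p : (Fin N → Θ) × Θ | p.2 ∈ A} ∩ E = E := by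
    apply Set.inter_eq_self_of_subset_right
    intro p hp
    exact hp.1
  rw [hBval, hBE]
  have hle : ENNReal.ofReal (1 - α) * Pr A ≤ μ E := hEG ▸ hlower
  calc ENNReal.ofReal (1 - α)
      = (Pr A)⁻¹ * (ENNReal.ofReal (1 - α) * Pr A) := by
        rw [mul_comm (ENNReal.ofReal (1 - α)) (Pr A), ← mul_assoc,
          ENNReal.inv_mul_cancel hApos.ne' (measure_ne_top Pr A), one_mul]
    _ ≤ (Pr A)⁻¹ * μ E := mul_le_mul_right hle _
end Aux
end
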